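/- arXiv:1812.11774 — 3 statements merged into one kernel-verified Lean document; each statement's English description precedes it below -/
import Mathlib

section
/- For every integer n ≥ 1, a(n) = (n+1)! − d(n+1) − d(n). -/
open scoped Classical

noncomputable section

/-- The element of `c` minimizing `key`, if `c` is nonempty. -/
def pickMin {n : ℕ} {α : Type*} [LinearOrder α] (key : Fin n → α)
    (c : Finset (Fin n)) : Option (Fin n) :=
  if h : c.Nonempty then some (Classical.choose (Finset.exists_min_image c key h)) else none

/-- The set of matched `V`-vertices after the first `j` arrivals of the online greedy
process on the bipartite graph with `U`-side arrival order `u_0, u_1, …` and adjacency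
`adj`, in which each arriving `u_j` is matched to its currently unmatched neighbor
minimizing `key` (if any). -/
def greedyRun {n : ℕ} {α : Type*} [LinearOrder α] (adj : ℕ → Fin n → Prop)
    (key : Fin n → α) : ℕ → Finset (Fin n)
  | 0 => ∅
  | j + 1 =>
    match pickMin key ((Finset.univ.filter fun i => adj j i) \ greedyRun adj key j) with
    | some v => insert v (greedyRun adj key j)
    | none => greedyRun adj key j

/-- The `V`-vertex that the arriving vertex `u_j` (0-indexed) gets matched to, if any. -/
def greedyMatchU {n : ℕ} {α : Type*} [LinearOrder α] (adj : ℕ → Fin n → Prop)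
    (key : Fin n → α) (j : ℕ) : Option (Fin n) :=
  pickMin key ((Finset.univ.filter fun i => adj j i) \ greedyRun adj key j)

/-- Adjacency of the monotone graph `MonotoneG` (0-indexed):
`u_j` is adjacent to `v_i` iff `j ≤ i`. -/
def monoAdj (n : ℕ) : ℕ → Fin n → Prop := fun j i => j ≤ (i : ℕ)

/-- The set of matched `V`-vertices produced by the Ranking greedy process on `MonotoneG`
with permutation `π` (where `π i` is the rank of `v_i`, 0-indexed). -/
def rankMatched (n : ℕ) (π : Equiv.Perm (Fin n)) : Finset (Fin n) :=
  greedyRun (monoAdj n) (fun i => π i) n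

/-- `x(π)`: the number of edges of the matching produced by Ranking on `MonotoneG`. -/
def xSize (n : ℕ) (π : Equiv.Perm (Fin n)) : ℕ := (rankMatched n π).card

/-- `a(n) = Σ_π x(π)`, over all `n!` permutations. -/
def aVal (n : ℕ) : ℕ := ∑ π : Equiv.Perm (Fin n), xSize n π

/-- `a(n,i)` (with `i` 1-indexed): the number of permutations `π` of `{1,…,n}` for which
the vertex of rank `i` under `π` is matched by the Ranking greedy process on `MonotoneG`. -/
def aIdx (n i : ℕ) : ℕ :=
  (Finset.univ.filter fun π : Equiv.Perm (Fin n) =>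
    ∃ v : Fin n, (π v : ℕ) = i - 1 ∧ v ∈ rankMatched n π).card

/-- `d(m,i)` (with `i` 1-indexed): the number of permutations of `{1,…,m}` all of whose
fixed points (if any) lie among the first `i` items. -/
def dIdx (m i : ℕ) : ℕ :=
  (Finset.univ.filter fun σ : Equiv.Perm (Fin m) => ∀ x, σ x = x → (x : ℕ) < i).card

/-- `d(m)`: the number of derangements of `{1,…,m}`. -/
def numDer (m : ℕ) : ℕ :=
  (Finset.univ.filter fun σ : Equiv.Perm (Fin m) => ∀ x, σ x ≠ x).card

/-- The key for the greedy-by-price process: buy the cheapest available item,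
breaking ties in favor of the smaller index. -/
def priceKey {n : ℕ} (p : Fin n → ℝ) : Fin n → Lex (ℝ × ℕ) := fun i => toLex (p i, (i : ℕ))

/-- The utility `y(u_j)` of buyer `u_j` (0-indexed) in the greedy-by-price process:
`1 - p v` if `u_j` buys item `v`, and `0` if `u_j` remains unmatched. -/
def utility (n : ℕ) (adj : ℕ → Fin n → Prop) (p : Fin n → ℝ) (j : ℕ) : ℝ :=
  (greedyMatchU adj (priceKey p) j).elim 0 (fun v => 1 - p v)

/-- The revenue `r(v)` from item `v` in the greedy-by-price process:
`p v` if `v` is sold, and `0` otherwise. -/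
def revenue (n : ℕ) (adj : ℕ → Fin n → Prop) (p : Fin n → ℝ) (v : Fin n) : ℝ :=
  if v ∈ greedyRun adj (priceKey p) n then p v else 0

/-- The `m`-th harmonic number `H_m = Σ_{i=1}^m 1/i` (with `H_0 = 0`). -/
def harm (m : ℕ) : ℝ := ∑ i ∈ Finset.range m, (1 : ℝ) / (i + 1)

namespace MonoAux

open Equiv Finset

/-- greedy counter -/
def gc (q : ℕ → ℕ) : ℕ → ℕ
  | 0 => 0
  | r + 1 => gc q r + (if gc q r ≤ q r then 1 else 0)

lemma gc_succ (q : ℕ → ℕ) (r : ℕ) :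
    gc q (r + 1) = gc q r + (if gc q r ≤ q r then 1 else 0) := rfl

lemma gc_mono (q : ℕ → ℕ) : Monotone (gc q) := by
  apply monotone_nat_of_le_succ
  intro r; rw [gc_succ]; split <;> omega

lemma gc_le (q : ℕ → ℕ) (r : ℕ) : gc q r ≤ r := by
  induction r with
  | zero => simp [gc]
  | succ r ih => rw [gc_succ]; split <;> omega

lemma gc_lt_of_good_lt {q : ℕ → ℕ} {r s : ℕ} (h : r < s) (hg : gc q r ≤ q r) :
    gc q r < gc q s := by
  have h1 : gc q (r + 1) = gc q r + 1 := by rw [gc_succ, if_pos hg]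
  have := gc_mono q (show r + 1 ≤ s from h)
  omega

lemma gc_exists {q : ℕ → ℕ} {j m : ℕ} (h : j < gc q m) :
    ∃ r < m, gc q r = j ∧ gc q r ≤ q r := by
  induction m with
  | zero => simp [gc] at h
  | succ m ih =>
    rcases lt_or_ge j (gc q m) with h' | h'
    · obtain ⟨r, hr, h1, h2⟩ := ih h'
      exact ⟨r, by omega, h1, h2⟩
    · rw [gc_succ] at h
      have hgood : gc q m ≤ q m := by by_contra hc; rw [if_neg hc] at h; omega
      rw [if_pos hgood] at h
      exact ⟨m, by omega, by omega, hgood⟩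

lemma gc_eq_of_eq {q q' : ℕ → ℕ} {k : ℕ} (h : ∀ r < k, q r = q' r) :
    gc q k = gc q' k := by
  induction k with
  | zero => rfl
  | succ k ih =>
    have hk : gc q k = gc q' k := ih (fun r hr => h r (by omega))
    rw [gc_succ, gc_succ, hk, h k (by omega)]

lemma gc_congr {q q' : ℕ → ℕ} {v m : ℕ}
    (h : ∀ r < m, ∀ c ≤ v, (c ≤ q r ↔ c ≤ q' r)) (hm : gc q m ≤ v) :
    gc q' m = gc q m := by
  induction m with
  | zero => rfl
  | succ m ih =>
    have h1 : gc q m ≤ v := le_trans (gc_mono q (Nat.le_succ m)) hm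
    have hk : gc q' m = gc q m := ih (fun r hr => h r (by omega)) h1
    rw [gc_succ, gc_succ, hk]
    congr 1
    by_cases hg : gc q m ≤ q m
    · rw [if_pos hg, if_pos ((h m (by omega) _ h1).mp hg)]
    · rw [if_neg hg, if_neg (fun hc => hg ((h m (by omega) _ h1).mpr hc))]

/-- position sequence of a permutation -/
def Qn {n : ℕ} (u : Equiv.Perm (Fin n)) : ℕ → ℕ :=
  fun r => if h : r < n then (u ⟨r, h⟩ : ℕ) else 0

lemma Qn_coe {n : ℕ} (u : Equiv.Perm (Fin n)) (r : Fin n) :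
    Qn u (r : ℕ) = (u r : ℕ) := by
  simp [Qn, r.isLt]

lemma Qn_lt {n : ℕ} (u : Equiv.Perm (Fin n)) {r : ℕ} (h : r < n) :
    Qn u r < n := by
  simp only [Qn, dif_pos h]; exact (u ⟨r, h⟩).isLt

/-- order-compatibility of succAbove values -/
lemma succAbove_coe_iff {m : ℕ} (a : Fin (m + 1)) (j : Fin m) {c : ℕ} (hc : c ≤ (a : ℕ)) :
    (c ≤ (j : ℕ) ↔ c ≤ (a.succAbove j : ℕ)) := by
  rcases lt_or_ge (Fin.castSucc j) a with h | h
  · rw [Fin.succAbove_of_castSucc_lt _ _ h]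
    simp
  · rw [Fin.succAbove_of_le_castSucc _ _ h]
    have : (a : ℕ) ≤ (j : ℕ) := h
    simp only [Fin.val_succ]
    omega

/-- insert a point into a permutation: `a ↦ b`, `a.succAbove j ↦ b.succAbove (σ j)` -/
def insP {m : ℕ} (a b : Fin (m + 1)) (σ : Equiv.Perm (Fin m)) : Equiv.Perm (Fin (m + 1)) :=
  (finSuccEquiv' a).trans ((Equiv.optionCongr σ).trans (finSuccEquiv' b).symm)

lemma insP_apply_self {m : ℕ} (a b : Fin (m + 1)) (σ : Equiv.Perm (Fin m)) :
    insP a b σ a = b := by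
  simp [insP, finSuccEquiv'_at, finSuccEquiv'_symm_none]

lemma insP_succAbove {m : ℕ} (a b : Fin (m + 1)) (σ : Equiv.Perm (Fin m)) (j : Fin m) :
    insP a b σ (a.succAbove j) = b.succAbove (σ j) := by
  simp [insP, finSuccEquiv'_succAbove, finSuccEquiv'_symm_some]

/-- delete a point from a permutation -/
def delP {m : ℕ} (a b : Fin (m + 1)) (τ : Equiv.Perm (Fin (m + 1))) : Equiv.Perm (Fin m) :=
  Equiv.removeNone ((finSuccEquiv' a).symm.trans (τ.trans (finSuccEquiv' b)))

lemma delP_insP {m : ℕ} (a b : Fin (m + 1)) (σ : Equiv.Perm (Fin m)) :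
    delP a b (insP a b σ) = σ := by
  apply Equiv.ext; intro j
  set ρ := (finSuccEquiv' a).symm.trans ((insP a b σ).trans (finSuccEquiv' b)) with hρ
  have h1 : ρ (some j) = some (σ j) := by
    simp only [hρ, Equiv.trans_apply, finSuccEquiv'_symm_some, insP_succAbove,
      finSuccEquiv'_succAbove]
  have := Equiv.removeNone_some ρ ⟨σ j, h1⟩
  rw [h1] at this
  exact Option.some_injective _ this

lemma insP_delP {m : ℕ} (a b : Fin (m + 1)) (τ : Equiv.Perm (Fin (m + 1))) (h : τ a = b) :
    insP a b (delP a b τ) = τ := by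
  ext x
  rcases eq_or_ne x a with rfl | hx
  · rw [insP_apply_self, h]
  · obtain ⟨j, rfl⟩ := Fin.exists_succAbove_eq hx
    rw [insP_succAbove]
    set ρ := (finSuccEquiv' a).symm.trans (τ.trans (finSuccEquiv' b)) with hρ
    have hne : τ (a.succAbove j) ≠ b := by
      rw [← h]; exact fun hc => (Fin.succAbove_ne a j) (τ.injective hc)
    obtain ⟨y, hy⟩ := Fin.exists_succAbove_eq hne
    have h1 : ρ (some j) = some y := by
      simp only [hρ, Equiv.trans_apply, finSuccEquiv'_symm_some]
      rw [← hy, finSuccEquiv'_succAbove]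
    have h2 := Equiv.removeNone_some ρ ⟨y, h1⟩
    rw [h1] at h2
    have h3 : delP a b τ j = y := Option.some_injective _ h2
    rw [h3, hy]
end MonoAux

namespace MonoAux
open Equiv Finset

lemma succAbove_coe_lt_iff {m : ℕ} (a : Fin (m + 1)) (j : Fin m) {c : ℕ} (hc : c ≤ (a : ℕ)) :
    ((a.succAbove j : ℕ) < c ↔ (j : ℕ) < c) := by
  have := succAbove_coe_iff a j hc; omega

lemma dIdx_succ (m t : ℕ) (ht : t ≤ m) :
    dIdx (m + 1) (t + 1) = dIdx (m + 1) t + dIdx m t := by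
  classical
  set a : Fin (m + 1) := ⟨t, by omega⟩ with ha
  have hat : (a : ℕ) = t := rfl
  set P : Equiv.Perm (Fin (m + 1)) → Prop := fun σ => ∀ x, σ x = x → (x : ℕ) < t + 1 with hP
  have key := Finset.card_filter_add_card_filter_not
    (s := Finset.univ.filter P) (p := fun σ => σ a = a)
  have h2 : ((Finset.univ.filter P).filter (fun σ => ¬ σ a = a))
      = Finset.univ.filter (fun σ : Equiv.Perm (Fin (m + 1)) => ∀ x, σ x = x → (x : ℕ) < t) := by
    ext σ
    simp only [Finset.mem_filter, Finset.mem_univ, true_and, hP]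
    constructor
    · rintro ⟨h1, h2⟩ x hx
      have := h1 x hx
      have hxa : x ≠ a := fun hc => h2 (by rw [← hc]; exact hx)
      have : (x : ℕ) ≠ t := fun hc => hxa (Fin.ext (by rw [hc, hat]))
      omega
    · intro h1
      refine ⟨fun x hx => by have := h1 x hx; omega, fun hc => ?_⟩
      have := h1 a hc
      omega
  have h3 : ((Finset.univ.filter P).filter (fun σ => σ a = a)).card = dIdx m t := by
    rw [dIdx]
    apply Finset.card_nbij' (i := delP a a) (j := insP a a)
    · intro σ hσ
      simp only [Finset.mem_coe, Finset.mem_filter, Finset.mem_univ, true_and, hP] at hσ ⊢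
      obtain ⟨h1, h2⟩ := hσ
      intro j hj
      have hins := insP_delP a a σ h2
      have hfp : σ (a.succAbove j) = a.succAbove j := by
        conv_lhs => rw [← hins]
        rw [insP_succAbove, hj]
      have hlt := h1 _ hfp
      have hne : (a.succAbove j : ℕ) ≠ t := fun hc => (Fin.succAbove_ne a j) (Fin.ext (by rw [hc, hat]))
      have : (a.succAbove j : ℕ) < t := by omega
      exact (succAbove_coe_lt_iff a j (le_of_eq hat.symm)).mp this
    · intro u hu
      simp only [Finset.mem_coe, Finset.mem_filter, Finset.mem_univ, true_and, hP] at hu ⊢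
      constructor
      · intro x hx
        rcases eq_or_ne x a with rfl | hxa
        · omega
        · obtain ⟨j, rfl⟩ := Fin.exists_succAbove_eq hxa
          rw [insP_succAbove] at hx
          have : u j = j := Fin.succAbove_right_injective hx
          have := hu j this
          have := (succAbove_coe_lt_iff a j (le_of_eq hat.symm)).mpr this
          omega
      · exact insP_apply_self a a u
    · intro σ hσ
      simp only [Finset.mem_coe, Finset.mem_filter, Finset.mem_univ, true_and] at hσ
      exact insP_delP a a σ hσ.2
    · intro u _
      exact delP_insP a a u
  have h4 : (Finset.univ.filter P).card = dIdx (m + 1) (t + 1) := rfl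
  have h5 : ((Finset.univ.filter P).filter (fun σ => ¬ σ a = a)).card = dIdx (m + 1) t := by
    rw [h2]; rfl
  omega

lemma dIdx_top (m : ℕ) : dIdx m m = Nat.factorial m := by
  rw [dIdx]
  rw [Finset.filter_true_of_mem (fun σ _ => fun x _ => x.isLt)]
  simp [Finset.card_univ, Fintype.card_perm]

lemma dIdx_zero (m : ℕ) : dIdx m 0 = numDer m := by
  rw [dIdx, numDer]
  congr 1
  ext σ
  simp only [Finset.mem_filter, Finset.mem_univ, true_and]
  constructor
  · intro h x hx
    exact absurd (h x hx) (by omega)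
  · intro h x hx
    exact absurd hx (h x)

end MonoAux


namespace MonoAux
open Equiv Finset

lemma pickMin_eq_some {n : ℕ} {α : Type*} [LinearOrder α] {key : Fin n → α} {c : Finset (Fin n)}
    (h : c.Nonempty) :
    ∃ v, pickMin key c = some v ∧ v ∈ c ∧ ∀ b ∈ c, key v ≤ key b := by
  rw [pickMin, dif_pos h]
  obtain ⟨h1, h2⟩ := Classical.choose_spec (Finset.exists_min_image c key h)
  exact ⟨_, rfl, h1, h2⟩

lemma pickMin_none {n : ℕ} {α : Type*} [LinearOrder α] {key : Fin n → α} {c : Finset (Fin n)}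
    (h : ¬ c.Nonempty) : pickMin key c = none := dif_neg h

lemma run_eq {n : ℕ} (π : Equiv.Perm (Fin n)) (j : ℕ) :
    greedyRun (monoAdj n) (fun i => π i) j =
      Finset.univ.filter (fun p : Fin n =>
        gc (Qn π.symm) (π p) ≤ Qn π.symm ((π p : ℕ)) ∧ gc (Qn π.symm) (π p) < j) := by
  induction j with
  | zero =>
    rw [show greedyRun (monoAdj n) (fun i => π i) 0 = ∅ from rfl]
    ext x; simp
  | succ j ih =>
    set q : ℕ → ℕ := Qn π.symm with hq
    have hqval : ∀ x : Fin n, q ((π x : ℕ)) = (x : ℕ) := by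
      intro x; rw [hq, Qn_coe, Equiv.symm_apply_apply]
    set C := (Finset.univ.filter fun i => monoAdj n j i) \
        greedyRun (monoAdj n) (fun i => π i) j with hC
    have hrunsucc : greedyRun (monoAdj n) (fun i => π i) (j + 1) =
        match pickMin (fun i => π i) C with
        | some v => insert v (greedyRun (monoAdj n) (fun i => π i) j)
        | none => greedyRun (monoAdj n) (fun i => π i) j := rfl
    by_cases hex : ∃ r : Fin n, gc q (r : ℕ) ≤ q (r : ℕ) ∧ gc q (r : ℕ) = j
    · obtain ⟨r, hgood, hidx⟩ := hex
      set p := π.symm r with hp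
      have hπp : π p = r := by rw [hp, Equiv.apply_symm_apply]
      have hqr : q (r : ℕ) = (p : ℕ) := by rw [hq, Qn_coe]
      have hjp : j ≤ (p : ℕ) := by omega
      have hpC : p ∈ C := by
        rw [hC, Finset.mem_sdiff, ih]
        constructor
        · simp only [Finset.mem_filter, Finset.mem_univ, true_and, monoAdj]
          exact (Finset.mem_filter.mpr ⟨Finset.mem_univ _, hjp⟩ : p ∈ Finset.univ.filter fun i => monoAdj n j i)
        · simp only [Finset.mem_filter, Finset.mem_univ, true_and, hπp, not_and]
          intro _; omega
      obtain ⟨c, hcsome, hcC, hcmin⟩ := pickMin_eq_some (key := fun i => π i) ⟨p, hpC⟩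
      have hcp : c = p := by
        have h1 : π c ≤ π p := hcmin p hpC
        have h2 : (r : ℕ) ≤ ((π c : Fin n) : ℕ) := by
          by_contra hcon
          push_neg at hcon
          rw [hC, Finset.mem_sdiff, ih] at hcC
          obtain ⟨hcadj, hcnot⟩ := hcC
          have hcj : j ≤ (c : ℕ) := by
            exact (Finset.mem_filter.mp hcadj).2
          have hqc : q ((π c : ℕ)) = (c : ℕ) := hqval c
          rcases le_or_gt (gc q (π c)) (q ((π c : ℕ))) with hgd | hbd
          · have hlt : gc q (π c) < gc q (r : ℕ) := gc_lt_of_good_lt hcon hgd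
            exact hcnot (by
              simp only [Finset.mem_filter, Finset.mem_univ, true_and]
              exact ⟨hgd, by omega⟩)
          · have hmono : gc q ((π c : ℕ)) ≤ gc q (r : ℕ) := gc_mono q (le_of_lt hcon)
            omega
        have h3 : π c = r := by
          apply le_antisymm
          · rw [← hπp]; exact h1
          · exact h2
        have : π c = π p := by rw [h3, hπp]
        exact π.injective this
      rw [hrunsucc, hcsome]
      subst hcp
      ext x
      rw [Finset.mem_insert, ih]
      simp only [Finset.mem_filter, Finset.mem_univ, true_and]
      constructor
      · rintro (rfl | ⟨hg, hlt⟩)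
        · rw [hπp]; exact ⟨by omega, by omega⟩
        · exact ⟨hg, by omega⟩
      · rintro ⟨hg, hlt⟩
        rcases lt_or_ge (gc q (π x)) j with h' | h'
        · exact Or.inr ⟨hg, h'⟩
        · left
          have hxj : gc q ((π x : ℕ)) = j := by omega
          have hval : ((π x : Fin n) : ℕ) = (r : ℕ) := by
            rcases lt_trichotomy ((π x : Fin n) : ℕ) ((r : ℕ)) with h'' | h'' | h''
            · have := gc_lt_of_good_lt h'' hg; omega
            · exact h''
            · have := gc_lt_of_good_lt h'' hgood; omega
          have hπx : π x = r := Fin.ext hval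
          rw [hp, ← hπx, Equiv.symm_apply_apply]
    · push_neg at hex
      have hCempty : C = ∅ := by
        rw [Finset.eq_empty_iff_forall_notMem]
        intro b hb
        rw [hC, Finset.mem_sdiff, ih] at hb
        obtain ⟨hbadj, hbnot⟩ := hb
        have hbj : j ≤ (b : ℕ) := by
          exact (Finset.mem_filter.mp hbadj).2
        have hqb : q ((π b : ℕ)) = (b : ℕ) := hqval b
        have hgcle : gc q ((π b : ℕ)) ≤ j := by
          by_contra hcon
          push_neg at hcon
          obtain ⟨r', hr', hgc', hgood'⟩ := gc_exists hcon
          have hr'n : r' < n := lt_trans hr' (π b).isLt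
          exact absurd hgc' (by
            have := hex ⟨r', hr'n⟩ (by exact hgood')
            exact this)
        rcases le_or_gt (gc q ((π b : ℕ))) (q ((π b : ℕ))) with hgd | hbd
        · have hne := hex (π b) hgd
          exact hbnot (by
            simp only [Finset.mem_filter, Finset.mem_univ, true_and]
            exact ⟨hgd, by omega⟩)
        · omega
      have hnone : pickMin (fun i : Fin n => π i) C = none :=
        pickMin_none (by rw [hCempty]; exact Finset.not_nonempty_empty)
      rw [hrunsucc, hnone, ih]
      ext x
      simp only [Finset.mem_filter, Finset.mem_univ, true_and]
      constructor
      · rintro ⟨hg, hlt⟩; exact ⟨hg, by omega⟩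
      · rintro ⟨hg, hlt⟩
        have := hex (π x) hg
        exact ⟨hg, by omega⟩

end MonoAux


namespace MonoAux
open Equiv Finset

/-- number of permutations of `Fin n` for which rank `i` is "good" -/
def Mc (n i : ℕ) : ℕ :=
  (Finset.univ.filter fun u : Equiv.Perm (Fin n) => gc (Qn u) i ≤ Qn u i).card

lemma xSize_eq {n : ℕ} (π : Equiv.Perm (Fin n)) :
    xSize n π =
      (Finset.univ.filter fun r : Fin n => gc (Qn π.symm) (r : ℕ) ≤ Qn π.symm (r : ℕ)).card := by
  rw [xSize, rankMatched, run_eq]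
  have hset : (Finset.univ.filter fun p : Fin n =>
      gc (Qn π.symm) (π p) ≤ Qn π.symm ((π p : ℕ)) ∧ gc (Qn π.symm) (π p) < n) =
      Finset.univ.filter (fun p : Fin n => gc (Qn π.symm) (π p) ≤ Qn π.symm ((π p : ℕ))) := by
    ext p
    simp only [Finset.mem_filter, Finset.mem_univ, true_and]
    have : gc (Qn π.symm) (π p) < n := lt_of_le_of_lt (gc_le _ _) (π p).isLt
    tauto
  rw [hset]
  apply Finset.card_nbij' (i := fun p => π p) (j := fun r => π.symm r)
  · intro p hp
    simpa only [Finset.mem_coe, Finset.mem_filter, Finset.mem_univ, true_and] using hp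
  · intro r hr
    simp only [Finset.mem_coe, Finset.mem_filter, Finset.mem_univ, true_and, Equiv.apply_symm_apply] at hr ⊢
    exact hr
  · intro p _; exact Equiv.symm_apply_apply π p
  · intro r _; exact Equiv.apply_symm_apply π r

lemma aVal_eq (n : ℕ) : aVal n = ∑ i ∈ Finset.range n, Mc n i := by
  rw [aVal]
  have step1 : ∑ π : Equiv.Perm (Fin n), xSize n π =
      ∑ u : Equiv.Perm (Fin n),
        (Finset.univ.filter fun r : Fin n => gc (Qn u) (r : ℕ) ≤ Qn u (r : ℕ)).card := by
    apply Fintype.sum_bijective (fun π : Equiv.Perm (Fin n) => π.symm)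
      (Function.Involutive.bijective (fun π => Equiv.symm_symm π))
    intro π
    exact xSize_eq π
  rw [step1]
  have step2 : ∀ u : Equiv.Perm (Fin n),
      (Finset.univ.filter fun r : Fin n => gc (Qn u) (r : ℕ) ≤ Qn u (r : ℕ)).card =
      ∑ r : Fin n, (if gc (Qn u) (r : ℕ) ≤ Qn u (r : ℕ) then 1 else 0) := by
    intro u; rw [Finset.card_filter]
  simp only [step2]
  rw [Finset.sum_comm]
  have step3 : ∀ r : Fin n,
      (∑ u : Equiv.Perm (Fin n), if gc (Qn u) (r : ℕ) ≤ Qn u (r : ℕ) then 1 else 0) =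
      Mc n (r : ℕ) := by
    intro r; rw [Mc, Finset.card_filter]
  simp only [step3]
  exact Fin.sum_univ_eq_sum_range (fun i => Mc n i) n

end MonoAux


namespace MonoAux
open Equiv Finset

lemma Qn_lt_apply {n : ℕ} (u : Equiv.Perm (Fin n)) {r : ℕ} (h : r < n) :
    Qn u r = (u ⟨r, h⟩ : ℕ) := dif_pos h

lemma Mc_zero (n : ℕ) : Mc n 0 = Nat.factorial n := by
  rw [Mc]
  rw [Finset.filter_true_of_mem (fun u _ => by
    show gc (Qn u) 0 ≤ Qn u 0
    rw [show gc (Qn u) 0 = 0 from rfl]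
    omega)]
  simp [Finset.card_univ, Fintype.card_perm]

lemma Qn_insP_low {m i : ℕ} (h : i + 1 ≤ m) (b : Fin (m + 1)) (u : Equiv.Perm (Fin m))
    {r : ℕ} (hr : r ≤ i) :
    Qn (insP ⟨i + 1, by omega⟩ b u) r = ((b.succAbove (u ⟨r, by omega⟩) : Fin (m + 1)) : ℕ) := by
  have hrm : r < m := by omega
  have hrm1 : r < m + 1 := by omega
  rw [Qn_lt_apply _ hrm1]
  have hsa : (⟨i + 1, by omega⟩ : Fin (m + 1)).succAbove ⟨r, hrm⟩ = ⟨r, hrm1⟩ := by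
    rw [Fin.succAbove_of_castSucc_lt]
    · rfl
    · rw [Fin.lt_def]
      show r < i + 1
      omega
  rw [← hsa, insP_succAbove]

lemma Qn_insP_top {m i : ℕ} (h : i + 1 ≤ m) (b : Fin (m + 1)) (u : Equiv.Perm (Fin m)) :
    Qn (insP ⟨i + 1, by omega⟩ b u) (i + 1) = (b : ℕ) := by
  rw [Qn_lt_apply _ (show i + 1 < m + 1 by omega)]
  rw [insP_apply_self]

lemma card_swap (m i : ℕ) (h : i + 1 ≤ m) :
    (Finset.univ.filter (fun u : Equiv.Perm (Fin (m + 1)) =>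
      (gc (Qn u) (i + 1) ≤ Qn u (i + 1)) ∧ ¬ (gc (Qn u) i ≤ Qn u i))).card =
    (Finset.univ.filter (fun u : Equiv.Perm (Fin (m + 1)) =>
      ((gc (Qn u) i ≤ Qn u i) ∧ ¬ (gc (Qn u) (i + 1) ≤ Qn u (i + 1))) ∧
        Qn u (i + 1) < gc (Qn u) i)).card := by
  set a : Fin (m + 1) := ⟨i, by omega⟩ with ha
  set a' : Fin (m + 1) := ⟨i + 1, by omega⟩ with ha'
  have hQswEq : ∀ (u : Equiv.Perm (Fin (m + 1))) (r : ℕ), r ≠ i → r ≠ i + 1 →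
      Qn ((Equiv.swap a a').trans u) r = Qn u r := by
    intro u r hr1 hr2
    by_cases hrm : r < m + 1
    · rw [Qn_lt_apply _ hrm, Qn_lt_apply _ hrm]
      show (u (Equiv.swap a a' ⟨r, hrm⟩) : ℕ) = _
      rw [Equiv.swap_apply_of_ne_of_ne]
      · exact fun hc => hr1 (by rw [← Fin.val_eq_val] at hc; exact hc)
      · exact fun hc => hr2 (by rw [← Fin.val_eq_val] at hc; exact hc)
    · simp only [Qn, dif_neg hrm]
  have hQswI : ∀ u : Equiv.Perm (Fin (m + 1)),
      Qn ((Equiv.swap a a').trans u) i = Qn u (i + 1) := by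
    intro u
    rw [Qn_lt_apply _ (show i < m + 1 by omega), Qn_lt_apply _ (show i + 1 < m + 1 by omega)]
    show (u (Equiv.swap a a' ⟨i, by omega⟩) : ℕ) = _
    rw [show (⟨i, by omega⟩ : Fin (m + 1)) = a from rfl, Equiv.swap_apply_left]
  have hQswI1 : ∀ u : Equiv.Perm (Fin (m + 1)),
      Qn ((Equiv.swap a a').trans u) (i + 1) = Qn u i := by
    intro u
    rw [Qn_lt_apply _ (show i + 1 < m + 1 by omega), Qn_lt_apply _ (show i < m + 1 by omega)]
    show (u (Equiv.swap a a' ⟨i + 1, by omega⟩) : ℕ) = _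
    rw [show (⟨i + 1, by omega⟩ : Fin (m + 1)) = a' from rfl, Equiv.swap_apply_right]
  have hgcsw : ∀ (u : Equiv.Perm (Fin (m + 1))) (k : ℕ), k ≤ i →
      gc (Qn ((Equiv.swap a a').trans u)) k = gc (Qn u) k := by
    intro u k hk
    apply gc_eq_of_eq
    intro r hr
    exact hQswEq u r (by omega) (by omega)
  have hswsw : ∀ u : Equiv.Perm (Fin (m + 1)),
      (Equiv.swap a a').trans ((Equiv.swap a a').trans u) = u := by
    intro u; apply Equiv.ext; intro x
    show u (Equiv.swap a a' (Equiv.swap a a' x)) = u x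
    rw [Equiv.swap_apply_self]
  apply Finset.card_nbij' (i := fun u => (Equiv.swap a a').trans u)
    (j := fun u => (Equiv.swap a a').trans u)
  · intro u hu
    simp only [Finset.mem_coe, Finset.mem_filter, Finset.mem_univ, true_and] at hu ⊢
    obtain ⟨h1, h2⟩ := hu
    push_neg at h2
    have hg : gc (Qn u) (i + 1) = gc (Qn u) i := by
      rw [gc_succ, if_neg (by omega)]
      omega
    have hgc1 : gc (Qn ((Equiv.swap a a').trans u)) i = gc (Qn u) i := hgcsw u i le_rfl
    have hv1 : Qn ((Equiv.swap a a').trans u) i = Qn u (i + 1) := hQswI u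
    have hv2 : Qn ((Equiv.swap a a').trans u) (i + 1) = Qn u i := hQswI1 u
    have hGnew : gc (Qn ((Equiv.swap a a').trans u)) i ≤ Qn ((Equiv.swap a a').trans u) i := by
      rw [hgc1, hv1]; omega
    have hgcnew1 : gc (Qn ((Equiv.swap a a').trans u)) (i + 1) = gc (Qn u) i + 1 := by
      rw [gc_succ, hgc1, if_pos (by rw [hv1]; omega)]
    refine ⟨⟨hGnew, ?_⟩, ?_⟩
    · rw [hgcnew1, hv2]; omega
    · rw [hgc1, hv2]; omega
  · intro w hw
    simp only [Finset.mem_coe, Finset.mem_filter, Finset.mem_univ, true_and] at hw ⊢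
    obtain ⟨⟨h1, h2⟩, h3⟩ := hw
    have hgc1 : gc (Qn ((Equiv.swap a a').trans w)) i = gc (Qn w) i := hgcsw w i le_rfl
    have hv1 : Qn ((Equiv.swap a a').trans w) i = Qn w (i + 1) := hQswI w
    have hv2 : Qn ((Equiv.swap a a').trans w) (i + 1) = Qn w i := hQswI1 w
    have hnew : ¬ (gc (Qn ((Equiv.swap a a').trans w)) i ≤ Qn ((Equiv.swap a a').trans w) i) := by
      rw [hgc1, hv1]; omega
    have hgcnew1 : gc (Qn ((Equiv.swap a a').trans w)) (i + 1) = gc (Qn w) i := by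
      rw [gc_succ, hgc1, if_neg (by rw [hv1]; omega)]
      omega
    refine ⟨?_, hnew⟩
    rw [hgcnew1, hv2]; omega
  · intro u _; exact hswsw u
  · intro u _; exact hswsw u

lemma card_ins (m i : ℕ) (h : i + 1 ≤ m) :
    (Finset.univ.filter (fun u : Equiv.Perm (Fin (m + 1)) =>
      (gc (Qn u) i ≤ Qn u i) ∧ Qn u (i + 1) = gc (Qn u) i)).card = Mc m i := by
  rw [Mc]
  apply Finset.card_nbij'
    (i := fun w => delP ⟨i + 1, by omega⟩ ⟨Qn w (i + 1), Qn_lt w (by omega)⟩ w)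
    (j := fun u => insP ⟨i + 1, by omega⟩ ⟨gc (Qn u) i, by have := gc_le (Qn u) i; omega⟩ u)
  · intro w hw
    simp only [Finset.mem_coe, Finset.mem_filter, Finset.mem_univ, true_and] at hw ⊢
    obtain ⟨h1, h2⟩ := hw
    set bw : Fin (m + 1) := ⟨Qn w (i + 1), Qn_lt w (by omega)⟩ with hbw
    have hwa : w ⟨i + 1, by omega⟩ = bw := by
      apply Fin.ext
      rw [hbw]
      exact (Qn_lt_apply w (show i + 1 < m + 1 by omega)).symm
    set u := delP ⟨i + 1, by omega⟩ bw w with hu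
    have hinsdel : insP ⟨i + 1, by omega⟩ bw u = w := insP_delP _ _ _ hwa
    have hiff : ∀ r ≤ i, ∀ c ≤ (bw : ℕ), (c ≤ Qn u r ↔ c ≤ Qn w r) := by
      intro r hr c hc
      conv_rhs => rw [← hinsdel]
      rw [Qn_insP_low h bw u hr, Qn_lt_apply u (show r < m by omega)]
      exact succAbove_coe_iff bw _ hc
    have hgceq : gc (Qn u) i = gc (Qn w) i := by
      apply gc_congr (v := (bw : ℕ))
      · intro r hr c hc
        exact (hiff r (by omega) c hc).symm
      · show gc (Qn w) i ≤ Qn w (i + 1)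
        omega
    have hbwv : (bw : ℕ) = gc (Qn w) i := h2
    rw [hgceq, ← hbwv]
    rw [hiff i le_rfl (bw : ℕ) le_rfl]
    omega
  · intro u hu
    simp only [Finset.mem_coe, Finset.mem_filter, Finset.mem_univ, true_and] at hu ⊢
    set b : Fin (m + 1) := ⟨gc (Qn u) i, by have := gc_le (Qn u) i; omega⟩ with hb
    have hiff : ∀ r ≤ i, ∀ c ≤ (b : ℕ),
        (c ≤ Qn u r ↔ c ≤ Qn (insP ⟨i + 1, by omega⟩ b u) r) := by
      intro r hr c hc
      rw [Qn_insP_low h b u hr, Qn_lt_apply u (show r < m by omega)]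
      exact succAbove_coe_iff b _ hc
    have hgceq : gc (Qn (insP ⟨i + 1, by omega⟩ b u)) i = gc (Qn u) i := by
      apply gc_congr (v := (b : ℕ))
      · intro r hr c hc
        exact hiff r (by omega) c hc
      · exact le_rfl
    constructor
    · rw [hgceq, ← hiff i le_rfl _ le_rfl]
      exact hu
    · rw [hgceq, Qn_insP_top h b u]
  · intro w hw
    simp only [Finset.mem_coe, Finset.mem_filter, Finset.mem_univ, true_and] at hw
    obtain ⟨h1, h2⟩ := hw
    set bw : Fin (m + 1) := ⟨Qn w (i + 1), Qn_lt w (by omega)⟩ with hbw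
    have hwa : w ⟨i + 1, by omega⟩ = bw := by
      apply Fin.ext
      rw [hbw]
      exact (Qn_lt_apply w (show i + 1 < m + 1 by omega)).symm
    set u := delP ⟨i + 1, by omega⟩ bw w with hu
    have hinsdel : insP ⟨i + 1, by omega⟩ bw u = w := insP_delP _ _ _ hwa
    have hiff : ∀ r ≤ i, ∀ c ≤ (bw : ℕ), (c ≤ Qn u r ↔ c ≤ Qn w r) := by
      intro r hr c hc
      conv_rhs => rw [← hinsdel]
      rw [Qn_insP_low h bw u hr, Qn_lt_apply u (show r < m by omega)]
      exact succAbove_coe_iff bw _ hc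
    have hgceq : gc (Qn u) i = gc (Qn w) i := by
      apply gc_congr (v := (bw : ℕ))
      · intro r hr c hc
        exact (hiff r (by omega) c hc).symm
      · show gc (Qn w) i ≤ Qn w (i + 1)
        omega
    have hbeq : (⟨gc (Qn u) i, by have := gc_le (Qn u) i; omega⟩ : Fin (m + 1)) = bw := by
      apply Fin.ext
      show gc (Qn u) i = (bw : ℕ)
      rw [hgceq, hbw]
      exact h2.symm
    show insP ⟨i + 1, by omega⟩ ⟨gc (Qn u) i, by have := gc_le (Qn u) i; omega⟩ u = w; rw [hbeq]
    exact hinsdel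
  · intro u hu
    simp only [Finset.mem_coe, Finset.mem_filter, Finset.mem_univ, true_and] at hu
    set b : Fin (m + 1) := ⟨gc (Qn u) i, by have := gc_le (Qn u) i; omega⟩ with hb
    have htop : Qn (insP ⟨i + 1, by omega⟩ b u) (i + 1) = (b : ℕ) := Qn_insP_top h b u
    have hbeq : (⟨Qn (insP ⟨i + 1, by omega⟩ b u) (i + 1),
        Qn_lt _ (by omega)⟩ : Fin (m + 1)) = b := Fin.ext htop
    show delP ⟨i + 1, by omega⟩ ⟨Qn (insP ⟨i + 1, by omega⟩ b u) (i + 1), Qn_lt _ (by omega)⟩ (insP ⟨i + 1, by omega⟩ b u) = u; rw [hbeq]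
    exact delP_insP _ _ u

lemma Mc_rec (m i : ℕ) (h : i + 1 ≤ m) :
    Mc (m + 1) i = Mc (m + 1) (i + 1) + Mc m i := by
  have e1 := Finset.card_filter_add_card_filter_not
    (s := Finset.univ.filter (fun u : Equiv.Perm (Fin (m + 1)) => gc (Qn u) i ≤ Qn u i))
    (p := fun u => gc (Qn u) (i + 1) ≤ Qn u (i + 1))
  have e2 := Finset.card_filter_add_card_filter_not
    (s := Finset.univ.filter (fun u : Equiv.Perm (Fin (m + 1)) =>
      gc (Qn u) (i + 1) ≤ Qn u (i + 1)))
    (p := fun u => gc (Qn u) i ≤ Qn u i)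
  rw [Finset.filter_filter, Finset.filter_filter] at e1
  rw [Finset.filter_filter, Finset.filter_filter] at e2
  have hcomm : (Finset.univ.filter (fun u : Equiv.Perm (Fin (m + 1)) =>
      (gc (Qn u) (i + 1) ≤ Qn u (i + 1)) ∧ gc (Qn u) i ≤ Qn u i)) =
      (Finset.univ.filter (fun u : Equiv.Perm (Fin (m + 1)) =>
      (gc (Qn u) i ≤ Qn u i) ∧ gc (Qn u) (i + 1) ≤ Qn u (i + 1))) := by
    ext u; simp only [Finset.mem_filter]; tauto
  rw [hcomm] at e2
  have e3 := Finset.card_filter_add_card_filter_not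
    (s := Finset.univ.filter (fun u : Equiv.Perm (Fin (m + 1)) =>
      (gc (Qn u) i ≤ Qn u i) ∧ ¬ (gc (Qn u) (i + 1) ≤ Qn u (i + 1))))
    (p := fun u => Qn u (i + 1) < gc (Qn u) i)
  rw [Finset.filter_filter, Finset.filter_filter] at e3
  have hsplit : (Finset.univ.filter (fun u : Equiv.Perm (Fin (m + 1)) =>
      ((gc (Qn u) i ≤ Qn u i) ∧ ¬ (gc (Qn u) (i + 1) ≤ Qn u (i + 1))) ∧
        ¬ Qn u (i + 1) < gc (Qn u) i)) =
      (Finset.univ.filter (fun u : Equiv.Perm (Fin (m + 1)) =>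
        (gc (Qn u) i ≤ Qn u i) ∧ Qn u (i + 1) = gc (Qn u) i)) := by
    ext u
    simp only [Finset.mem_filter, Finset.mem_univ, true_and, not_le, not_lt]
    constructor
    · rintro ⟨⟨h1, h2⟩, h3⟩
      have : gc (Qn u) (i + 1) = gc (Qn u) i + 1 := by rw [gc_succ, if_pos h1]
      omega
    · rintro ⟨h1, h2⟩
      have : gc (Qn u) (i + 1) = gc (Qn u) i + 1 := by rw [gc_succ, if_pos h1]
      omega
  rw [hsplit] at e3
  have hsw := card_swap m i h
  have hins := card_ins m i h
  have hMi : Mc (m + 1) i = (Finset.univ.filter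
      (fun u : Equiv.Perm (Fin (m + 1)) => gc (Qn u) i ≤ Qn u i)).card := rfl
  have hMi1 : Mc (m + 1) (i + 1) = (Finset.univ.filter
      (fun u : Equiv.Perm (Fin (m + 1)) => gc (Qn u) (i + 1) ≤ Qn u (i + 1))).card := rfl
  omega

end MonoAux


namespace MonoAux

lemma Mc_eq : ∀ n : ℕ, ∀ i : ℕ, i < n → Mc n i = dIdx n (n - i) := by
  intro n
  induction n with
  | zero => intro i hi; exact absurd hi (by omega)
  | succ m ihm =>
    intro i
    induction i with
    | zero =>
      intro _
      rw [Mc_zero, Nat.sub_zero, dIdx_top]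
    | succ i ihi =>
      intro hi
      have hi1 : i + 1 ≤ m := by omega
      have h1 : Mc (m + 1) i = Mc (m + 1) (i + 1) + Mc m i := Mc_rec m i hi1
      have h2 : Mc (m + 1) i = dIdx (m + 1) (m + 1 - i) := ihi (by omega)
      have h3 : Mc m i = dIdx m (m - i) := ihm i (by omega)
      have h4 : dIdx (m + 1) ((m - i) + 1) = dIdx (m + 1) (m - i) + dIdx m (m - i) :=
        dIdx_succ m (m - i) (by omega)
      have h5 : (m - i) + 1 = m + 1 - i := by omega
      rw [h5] at h4
      have h6 : m + 1 - (i + 1) = m - i := by omega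
      rw [h6]
      omega

end MonoAux

/-- For every integer `n ≥ 1`, `a(n) = (n+1)! − d(n+1) − d(n)`. -/
theorem stmt_0 (n : ℕ) (hn : 1 ≤ n) :
    (aVal n : ℤ) = (Nat.factorial (n + 1) : ℤ) - numDer (n + 1) - numDer n := by
  have h1 : aVal n = ∑ t ∈ Finset.range n, dIdx n (t + 1) := by
    rw [MonoAux.aVal_eq n]
    rw [Finset.sum_congr rfl (fun i hi => MonoAux.Mc_eq n i (Finset.mem_range.mp hi))]
    have hrefl : ∑ i ∈ Finset.range n, dIdx n (n - i) =
        ∑ i ∈ Finset.range n, (fun t => dIdx n (t + 1)) (n - 1 - i) :=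
      Finset.sum_congr rfl (fun i hi => by
        have := Finset.mem_range.mp hi
        simp only []
        congr 1
        omega)
    rw [hrefl]
    exact Finset.sum_range_reflect (fun t => dIdx n (t + 1)) n
  have h5 : ∑ t ∈ Finset.range (n + 1), (dIdx n t : ℤ) =
      (Nat.factorial (n + 1) : ℤ) - (numDer (n + 1) : ℤ) := by
    have hstep : ∀ t ∈ Finset.range (n + 1),
        (dIdx n t : ℤ) = (dIdx (n + 1) (t + 1) : ℤ) - (dIdx (n + 1) t : ℤ) := by
      intro t ht
      have h := MonoAux.dIdx_succ n t (by have := Finset.mem_range.mp ht; omega)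
      omega
    rw [Finset.sum_congr rfl hstep, Finset.sum_range_sub (fun t => (dIdx (n + 1) t : ℤ))]
    rw [MonoAux.dIdx_top, MonoAux.dIdx_zero]
  have h6 := Finset.sum_range_succ' (fun t => (dIdx n t : ℤ)) n
  have h9 : dIdx n 0 = numDer n := MonoAux.dIdx_zero n
  have hcast : (aVal n : ℤ) = ∑ t ∈ Finset.range n, (dIdx n (t + 1) : ℤ) := by
    rw [h1]
    push_cast
    rfl
  rw [hcast]
  rw [h9] at h6
  linarith [h5, h6]
end
end

section
/- For every integer n ≥ 2 and every i with 1 ≤ i < n, a(n,i) = a(n,i+1) + a(n−1,i). -/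
open scoped Classical

noncomputable section

namespace Stmt4Aux

/-- The running counter of the simple rank-order process. -/
def tcf (f : ℕ → ℕ) : ℕ → ℕ
  | 0 => 0
  | r + 1 => tcf f r + if tcf f r ≤ f r then 1 else 0

lemma tcf_succ_le (f : ℕ → ℕ) (r : ℕ) : tcf f (r + 1) ≤ tcf f r + 1 := by
  rw [tcf]; split <;> omega

lemma tcf_le_succ (f : ℕ → ℕ) (r : ℕ) : tcf f r ≤ tcf f (r + 1) := by
  rw [tcf]; omega

lemma tcf_mono (f : ℕ → ℕ) : Monotone (tcf f) :=
  monotone_nat_of_le_succ (tcf_le_succ f)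

lemma tcf_le (f : ℕ → ℕ) (r : ℕ) : tcf f r ≤ r := by
  induction r with
  | zero => rfl
  | succ r ih => have := tcf_succ_le f r; omega

lemma tcf_succ_win {f : ℕ → ℕ} {r : ℕ} (h : tcf f r ≤ f r) :
    tcf f (r + 1) = tcf f r + 1 := by
  rw [tcf, if_pos h]

lemma tcf_lt_of_win {f : ℕ → ℕ} {r r' : ℕ} (hrr : r < r') (h : tcf f r ≤ f r) :
    tcf f r < tcf f r' := by
  have h1 := tcf_succ_win h
  have h2 : tcf f (r + 1) ≤ tcf f r' := tcf_mono f hrr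
  omega

lemma tcf_exists {f : ℕ → ℕ} {j b : ℕ} (h : j < tcf f b) :
    ∃ s, s < b ∧ tcf f s = j ∧ tcf f s ≤ f s := by
  induction b with
  | zero => simp [tcf] at h
  | succ b ih =>
    by_cases hb : j < tcf f b
    · obtain ⟨s, h1, h2, h3⟩ := ih hb
      exact ⟨s, by omega, h2, h3⟩
    · have h1 := tcf_succ_le f b
      have h2 : tcf f b ≤ f b := by
        by_contra hw
        rw [tcf, if_neg hw] at h; omega
      refine ⟨b, by omega, ?_, h2⟩
      rw [tcf_succ_win h2] at h; omega

lemma tcf_win_unique {f : ℕ → ℕ} {r r' : ℕ} (h : tcf f r ≤ f r) (h' : tcf f r' ≤ f r')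
    (he : tcf f r = tcf f r') : r = r' := by
  rcases lt_trichotomy r r' with hc | hc | hc
  · have := tcf_lt_of_win hc h; omega
  · exact hc
  · have := tcf_lt_of_win hc h'; omega

lemma tcf_congr {f g : ℕ → ℕ} {r : ℕ} (h : ∀ k < r, f k = g k) :
    ∀ r' ≤ r, tcf f r' = tcf g r' := by
  intro r' hr'
  induction r' with
  | zero => rfl
  | succ r'' ih =>
    have e : tcf f r'' = tcf g r'' := ih (by omega)
    rw [tcf, tcf, ← e, h r'' (by omega)]

lemma tcf_congr_of_iff {f g : ℕ → ℕ} {r t : ℕ}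
    (h : ∀ k < r, ∀ s ≤ t, (s ≤ f k ↔ s ≤ g k)) (ht : tcf f r ≤ t) :
    ∀ r' ≤ r, tcf f r' = tcf g r' := by
  intro r' hr'
  induction r' with
  | zero => rfl
  | succ r'' ih =>
    have e : tcf f r'' = tcf g r'' := ih (by omega)
    have hs : tcf f r'' ≤ t := le_trans (tcf_mono f (by omega : r'' ≤ r)) ht
    have hiff := h r'' (by omega) (tcf f r'') hs
    rw [tcf, tcf, ← e]
    by_cases hw : tcf f r'' ≤ f r''
    · rw [if_pos hw, if_pos (hiff.mp hw)]
    · rw [if_neg hw, if_neg (fun hg => hw (hiff.mpr hg))]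

/-- The permutation `σ : Fin n ≃ Fin n` (rank ↦ vertex), as a function `ℕ → ℕ`. -/
def sfn {n : ℕ} (σ : Equiv.Perm (Fin n)) : ℕ → ℕ :=
  fun m => if h : m < n then (σ ⟨m, h⟩ : ℕ) else m

lemma sfn_lt {n : ℕ} (σ : Equiv.Perm (Fin n)) {m : ℕ} (h : m < n) :
    sfn σ m = (σ ⟨m, h⟩ : ℕ) := dif_pos h

lemma sfn_apply {n : ℕ} (π : Equiv.Perm (Fin n)) (v : Fin n) :
    sfn π.symm ((π v : ℕ)) = (v : ℕ) := by
  rw [sfn_lt π.symm (π v).isLt, Fin.eta, Equiv.symm_apply_apply]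

lemma pickMin_empty {n : ℕ} {α : Type*} [LinearOrder α] (key : Fin n → α) :
    pickMin key (∅ : Finset (Fin n)) = none := by
  rw [pickMin, dif_neg]
  exact Finset.not_nonempty_empty

lemma pickMin_eq_some {n : ℕ} {α : Type*} [LinearOrder α] {key : Fin n → α}
    (hinj : Function.Injective key) {c : Finset (Fin n)} {w : Fin n}
    (hw : w ∈ c) (hmin : ∀ u ∈ c, key w ≤ key u) : pickMin key c = some w := by
  have hne : c.Nonempty := ⟨w, hw⟩
  rw [pickMin, dif_pos hne]
  have hsp := Classical.choose_spec (Finset.exists_min_image c key hne)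
  exact congrArg some (hinj (le_antisymm (hsp.2 w hw) (hmin _ hsp.1)))

lemma greedyRun_eq_filter {n : ℕ} (π : Equiv.Perm (Fin n)) (j : ℕ) :
    greedyRun (monoAdj n) (fun i => π i) j =
      Finset.univ.filter (fun v : Fin n =>
        tcf (sfn π.symm) (π v : ℕ) < j ∧ tcf (sfn π.symm) (π v : ℕ) ≤ (v : ℕ)) := by
  induction j with
  | zero =>
    rw [greedyRun]
    ext u; simp
  | succ j ih =>
    have hkeyinj : Function.Injective (fun i : Fin n => π i) := π.injective
    by_cases hA : ∃ v : Fin n,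
        tcf (sfn π.symm) (π v : ℕ) = j ∧ tcf (sfn π.symm) (π v : ℕ) ≤ (v : ℕ)
    · obtain ⟨v0, hv0t, hv0m⟩ := hA
      have hv0C : v0 ∈ (Finset.univ.filter fun i => monoAdj n j i) \
          greedyRun (monoAdj n) (fun i => π i) j := by
        rw [ih]
        simp only [Finset.mem_sdiff, Finset.mem_filter, Finset.mem_univ, true_and, monoAdj]
        refine ⟨(Finset.mem_filter (p := fun i : Fin n => monoAdj n j i)).mpr ⟨Finset.mem_univ _, show j ≤ (v0 : ℕ) by omega⟩, ?_⟩
        rintro ⟨hcon, -⟩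
        omega
      have hmin : ∀ u ∈ (Finset.univ.filter fun i => monoAdj n j i) \
          greedyRun (monoAdj n) (fun i => π i) j, π v0 ≤ π u := by
        intro u hu
        rw [ih] at hu
        simp only [Finset.mem_sdiff, Finset.mem_filter, Finset.mem_univ, true_and,
          monoAdj] at hu
        obtain ⟨hju, hu2⟩ := hu
        by_contra hlt
        push_neg at hlt
        have hr' : (π u : ℕ) < (π v0 : ℕ) := hlt
        by_cases hwin : tcf (sfn π.symm) (π u : ℕ) ≤ sfn π.symm (π u : ℕ)
        · have hlt2 : tcf (sfn π.symm) (π u : ℕ) < tcf (sfn π.symm) (π v0 : ℕ) :=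
            tcf_lt_of_win hr' hwin
          rw [sfn_apply] at hwin
          exact hu2 ⟨by omega, hwin⟩
        · push_neg at hwin
          rw [sfn_apply] at hwin
          have hm : tcf (sfn π.symm) (π u : ℕ) ≤ tcf (sfn π.symm) (π v0 : ℕ) :=
            tcf_mono _ (le_of_lt hr')
          have hju' : j ≤ (u : ℕ) := ((Finset.mem_filter (p := fun i : Fin n => monoAdj n j i)).mp hju).2
          omega
      have hpick : pickMin (fun i : Fin n => π i)
          ((Finset.univ.filter fun i => monoAdj n j i) \
            greedyRun (monoAdj n) (fun i => π i) j) = some v0 :=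
        pickMin_eq_some hkeyinj hv0C hmin
      rw [greedyRun, hpick, ih]
      ext u
      simp only [Finset.mem_insert, Finset.mem_filter, Finset.mem_univ, true_and]
      constructor
      · rintro (rfl | ⟨h1, h2⟩)
        · exact ⟨by omega, hv0m⟩
        · exact ⟨by omega, h2⟩
      · rintro ⟨h1, h2⟩
        by_cases heq : tcf (sfn π.symm) (π u : ℕ) = j
        · left
          have hwu : tcf (sfn π.symm) (π u : ℕ) ≤ sfn π.symm (π u : ℕ) := by
            rw [sfn_apply]; exact h2
          have hwv : tcf (sfn π.symm) (π v0 : ℕ) ≤ sfn π.symm (π v0 : ℕ) := by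
            rw [sfn_apply]; exact hv0m
          have hvv : (π u : ℕ) = (π v0 : ℕ) := tcf_win_unique hwu hwv (by omega)
          exact π.injective (Fin.ext hvv)
        · exact Or.inr ⟨by omega, h2⟩
    · have hC : (Finset.univ.filter fun i => monoAdj n j i) \
          greedyRun (monoAdj n) (fun i => π i) j = ∅ := by
        rw [ih, Finset.eq_empty_iff_forall_notMem]
        intro u hu
        simp only [Finset.mem_sdiff, Finset.mem_filter, Finset.mem_univ, true_and,
          monoAdj] at hu
        obtain ⟨hju, hu2⟩ := hu
        by_cases hbig : j < tcf (sfn π.symm) (π u : ℕ)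
        · obtain ⟨s, hs1, hs2, hs3⟩ := tcf_exists hbig
          have hsn : s < n := lt_trans hs1 (π u).isLt
          refine hA ⟨π.symm ⟨s, hsn⟩, ?_, ?_⟩
          · rw [Equiv.apply_symm_apply]; exact hs2
          · rw [Equiv.apply_symm_apply]
            rw [sfn_lt π.symm hsn] at hs3
            exact hs3
        · push_neg at hbig
          by_cases hwin : tcf (sfn π.symm) (π u : ℕ) ≤ sfn π.symm (π u : ℕ)
          · rw [sfn_apply] at hwin
            have heq : tcf (sfn π.symm) (π u : ℕ) = j := by
              rcases lt_or_eq_of_le hbig with h | h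
              · exact absurd ⟨h, hwin⟩ hu2
              · exact h
            exact hA ⟨u, heq, hwin⟩
          · push_neg at hwin
            rw [sfn_apply] at hwin
            have hju' : j ≤ (u : ℕ) := ((Finset.mem_filter (p := fun i : Fin n => monoAdj n j i)).mp hju).2
            omega
      rw [greedyRun, hC, pickMin_empty, ih]
      ext u
      simp only [Finset.mem_filter, Finset.mem_univ, true_and]
      constructor
      · rintro ⟨h1, h2⟩; exact ⟨by omega, h2⟩
      · rintro ⟨h1, h2⟩
        refine ⟨?_, h2⟩
        by_cases heq : tcf (sfn π.symm) (π u : ℕ) = j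
        · exact absurd ⟨u, heq, h2⟩ hA
        · omega

lemma mem_rankMatched {n : ℕ} (π : Equiv.Perm (Fin n)) (v : Fin n) :
    v ∈ rankMatched n π ↔ tcf (sfn π.symm) (π v : ℕ) ≤ (v : ℕ) := by
  rw [rankMatched, greedyRun_eq_filter]
  simp only [Finset.mem_filter, Finset.mem_univ, true_and]
  constructor
  · exact fun h => h.2
  · intro h
    exact ⟨lt_of_le_of_lt (tcf_le _ _) (π v).isLt, h⟩


/-- Number of permutations (rank ↦ vertex) for which the rank-`r` vertex (0-indexed) wins. -/
def cnt (n r : ℕ) : ℕ :=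
  (Finset.univ.filter fun σ : Equiv.Perm (Fin n) => tcf (sfn σ) r ≤ sfn σ r).card

lemma aIdx_eq_cnt {n i : ℕ} (h1 : 1 ≤ i) (h2 : i ≤ n) : aIdx n i = cnt n (i - 1) := by
  have hi : i - 1 < n := by omega
  rw [aIdx, cnt]
  refine Finset.card_bij' (fun π _ => π.symm) (fun σ _ => σ.symm) ?_ ?_ ?_ ?_
  · intro π hπ
    simp only [Finset.mem_filter, Finset.mem_univ, true_and] at hπ ⊢
    obtain ⟨v, hv, hm⟩ := hπ
    rw [mem_rankMatched] at hm
    rw [hv] at hm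
    rw [sfn_lt π.symm hi]
    have hpv : π v = ⟨i - 1, hi⟩ := Fin.ext hv
    have hsv : π.symm ⟨i - 1, hi⟩ = v := by rw [← hpv, Equiv.symm_apply_apply]
    rw [hsv]
    exact hm
  · intro σ hσ
    simp only [Finset.mem_filter, Finset.mem_univ, true_and] at hσ ⊢
    refine ⟨σ ⟨i - 1, hi⟩, ?_, ?_⟩
    · simp
    · rw [mem_rankMatched]
      simp only [Equiv.symm_symm, Equiv.symm_apply_apply]
      rw [← sfn_lt σ hi]
      exact hσ
  · intro π _; simp
  · intro σ _; simp

open Fin.NatCast in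
lemma cnt_rec (m r : ℕ) (hr : r + 1 ≤ m) :
    cnt (m + 1) r = cnt (m + 1) (r + 1) + cnt m r := by
  classical
  have hrm : r < m + 1 := by omega
  have hrm1 : r + 1 < m + 1 := by omega
  set pr : Fin (m + 1) := ⟨r, hrm⟩ with hprdef
  set pr1 : Fin (m + 1) := ⟨r + 1, hrm1⟩ with hpr1def
  set Cp : Equiv.Perm (Fin (m + 1)) → Prop :=
    fun σ => sfn σ r = tcf (sfn σ) r ∧ tcf (sfn σ) r ≤ sfn σ (r + 1) with hCpdef
  -- values of sfn after composing with the swap of ranks r, r+1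
  have hswapval : ∀ σ : Equiv.Perm (Fin (m + 1)),
      (∀ k, k < r → sfn ((Equiv.swap pr pr1).trans σ) k = sfn σ k) ∧
      sfn ((Equiv.swap pr pr1).trans σ) r = sfn σ (r + 1) ∧
      sfn ((Equiv.swap pr pr1).trans σ) (r + 1) = sfn σ r := by
    intro σ
    refine ⟨?_, ?_, ?_⟩
    · intro k hk
      have hkm : k < m + 1 := by omega
      rw [sfn_lt _ hkm, sfn_lt _ hkm]
      simp only [Equiv.trans_apply]
      rw [Equiv.swap_apply_of_ne_of_ne]
      · exact Fin.ne_of_val_ne (show k ≠ r by omega)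
      · exact Fin.ne_of_val_ne (show k ≠ r + 1 by omega)
    · rw [sfn_lt _ hrm, sfn_lt _ hrm1]
      have h1 : (⟨r, hrm⟩ : Fin (m + 1)) = pr := rfl
      have h2 : (⟨r + 1, hrm1⟩ : Fin (m + 1)) = pr1 := rfl
      rw [h1, h2]
      simp only [Equiv.trans_apply, Equiv.swap_apply_left]
    · rw [sfn_lt _ hrm1, sfn_lt _ hrm]
      have h1 : (⟨r, hrm⟩ : Fin (m + 1)) = pr := rfl
      have h2 : (⟨r + 1, hrm1⟩ : Fin (m + 1)) = pr1 := rfl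
      rw [h1, h2]
      simp only [Equiv.trans_apply, Equiv.swap_apply_right]
  have hΦΦ : ∀ σ : Equiv.Perm (Fin (m + 1)),
      (Equiv.swap pr pr1).trans ((Equiv.swap pr pr1).trans σ) = σ := by
    intro σ; ext x; simp [Equiv.trans_apply, Equiv.swap_apply_self]
  have hkey : ∀ σ : Equiv.Perm (Fin (m + 1)),
      ((tcf (sfn ((Equiv.swap pr pr1).trans σ)) r ≤ sfn ((Equiv.swap pr pr1).trans σ) r)
        ∧ ¬ Cp ((Equiv.swap pr pr1).trans σ))
      ↔ tcf (sfn σ) (r + 1) ≤ sfn σ (r + 1) := by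
    intro σ
    obtain ⟨hpre, hra, hrb⟩ := hswapval σ
    have ht : tcf (sfn ((Equiv.swap pr pr1).trans σ)) r = tcf (sfn σ) r :=
      tcf_congr hpre r le_rfl
    have e1 : tcf (sfn σ) (r + 1)
        = tcf (sfn σ) r + if tcf (sfn σ) r ≤ sfn σ r then 1 else 0 := by rw [tcf]
    simp only [hCpdef]
    rw [ht, hra, hrb, e1]
    by_cases hb : tcf (sfn σ) r ≤ sfn σ r
    · rw [if_pos hb]
      constructor
      · rintro ⟨h1, h2⟩
        rcases lt_or_eq_of_le h1 with h | h
        · omega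
        · exact absurd ⟨h.symm, hb⟩ h2
      · intro h
        refine ⟨by omega, ?_⟩
        rintro ⟨hc, -⟩
        omega
    · rw [if_neg hb]
      constructor
      · rintro ⟨h1, -⟩; omega
      · intro h
        refine ⟨by omega, ?_⟩
        rintro ⟨-, hc⟩
        exact hb hc
  have hsplit := Finset.card_filter_add_card_filter_not
    (s := Finset.univ.filter fun σ : Equiv.Perm (Fin (m + 1)) => tcf (sfn σ) r ≤ sfn σ r) Cp
  rw [Finset.filter_filter, Finset.filter_filter] at hsplit
  have hCG : (Finset.univ.filter fun σ : Equiv.Perm (Fin (m + 1)) =>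
      (tcf (sfn σ) r ≤ sfn σ r) ∧ Cp σ) = Finset.univ.filter Cp := by
    apply Finset.filter_congr
    intro σ _
    constructor
    · exact fun h => h.2
    · intro h
      exact ⟨le_of_eq h.1.symm, h⟩
  have hclaim1 : (Finset.univ.filter fun σ : Equiv.Perm (Fin (m + 1)) =>
      (tcf (sfn σ) r ≤ sfn σ r) ∧ ¬ Cp σ).card = cnt (m + 1) (r + 1) := by
    rw [cnt]
    refine Finset.card_bij' (fun σ _ => (Equiv.swap pr pr1).trans σ)
      (fun σ _ => (Equiv.swap pr pr1).trans σ) ?_ ?_ ?_ ?_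
    · intro σ hσ
      simp only [Finset.mem_filter, Finset.mem_univ, true_and] at hσ ⊢
      have hk := hkey ((Equiv.swap pr pr1).trans σ)
      rw [hΦΦ σ] at hk
      exact hk.mp hσ
    · intro σ hσ
      simp only [Finset.mem_filter, Finset.mem_univ, true_and] at hσ ⊢
      exact (hkey σ).mpr hσ
    · intro σ _; exact hΦΦ σ
    · intro σ _; exact hΦΦ σ
  have hclaim2 : (Finset.univ.filter Cp).card = cnt m r := by
    have hrmm : r < m := by omega
    have hins_at : ∀ (τ : Equiv.Perm (Fin m)) (pt : Fin (m + 1)),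
        ((finSuccEquiv' pr).trans ((Equiv.optionCongr τ).trans (finSuccEquiv' pt).symm)) pr
          = pt := by
      intro τ pt
      simp [Equiv.trans_apply, finSuccEquiv'_at, finSuccEquiv'_symm_none]
    have hins_ab : ∀ (τ : Equiv.Perm (Fin m)) (pt : Fin (m + 1)) (x : Fin m),
        ((finSuccEquiv' pr).trans ((Equiv.optionCongr τ).trans (finSuccEquiv' pt).symm))
            (pr.succAbove x) = pt.succAbove (τ x) := by
      intro τ pt x
      simp [Equiv.trans_apply, finSuccEquiv'_succAbove, finSuccEquiv'_symm_some]
    have hdel_ab : ∀ (σ : Equiv.Perm (Fin (m + 1))) (pt : Fin (m + 1)), σ pr = pt →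
        ∀ x : Fin m,
        pt.succAbove ((Equiv.removeNone
            ((finSuccEquiv' pr).symm.trans (σ.trans (finSuccEquiv' pt)))) x)
          = σ (pr.succAbove x) := by
      intro σ pt hσpr x
      set e := (finSuccEquiv' pr).symm.trans (σ.trans (finSuccEquiv' pt)) with he
      have h1 : e (some x) = finSuccEquiv' pt (σ (pr.succAbove x)) := by
        simp [he, Equiv.trans_apply, finSuccEquiv'_symm_some]
      have hne : σ (pr.succAbove x) ≠ pt := by
        rw [← hσpr]
        exact fun hcc => Fin.succAbove_ne pr x (σ.injective hcc)
      obtain ⟨z, hz⟩ := Fin.exists_succAbove_eq hne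
      have h2 : e (some x) = some z := by rw [h1, ← hz, finSuccEquiv'_succAbove]
      have h3 : some (Equiv.removeNone e x) = e (some x) := Equiv.removeNone_some e ⟨z, h2⟩
      rw [h2] at h3
      rw [Option.some_injective _ h3, hz]
    have hval : ∀ (p : Fin (m + 1)) (x : Fin m),
        ((p.succAbove x : Fin (m + 1)) : ℕ)
          = if (x : ℕ) < (p : ℕ) then (x : ℕ) else (x : ℕ) + 1 := by
      intro p x
      rcases lt_or_ge ((x : ℕ)) ((p : ℕ)) with h | h
      · rw [if_pos h, Fin.succAbove_of_castSucc_lt]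
        · simp
        · rw [Fin.lt_def]; simpa using h
      · rw [if_neg (not_lt.mpr h), Fin.succAbove_of_le_castSucc]
        · simp
        · rw [Fin.le_def]; simpa using h
    have hsucc_pr_val : ∀ (x : Fin m),
        ((pr.succAbove x : Fin (m + 1)) : ℕ)
          = if (x : ℕ) < r then (x : ℕ) else (x : ℕ) + 1 := by
      intro x; rw [hval]
    have hins_val : ∀ (τ : Equiv.Perm (Fin m)) (pt : Fin (m + 1)) (x : Fin m),
        sfn ((finSuccEquiv' pr).trans ((Equiv.optionCongr τ).trans (finSuccEquiv' pt).symm))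
          ((pr.succAbove x : Fin (m + 1)) : ℕ) = ((pt.succAbove (τ x) : Fin (m + 1)) : ℕ) := by
      intro τ pt x
      rw [sfn_lt _ (pr.succAbove x).isLt, Fin.eta, hins_ab]
    have hdel_val : ∀ (σ : Equiv.Perm (Fin (m + 1))) (pt : Fin (m + 1)) (h : σ pr = pt)
        (x : Fin m),
        ((pt.succAbove ((Equiv.removeNone
            ((finSuccEquiv' pr).symm.trans (σ.trans (finSuccEquiv' pt)))) x) : Fin (m + 1)) : ℕ)
          = sfn σ ((pr.succAbove x : Fin (m + 1)) : ℕ) := by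
      intro σ pt h x
      rw [sfn_lt _ (pr.succAbove x).isLt, Fin.eta, hdel_ab σ pt h x]
    have hsfn_r : ∀ σ : Equiv.Perm (Fin (m + 1)), sfn σ r = ((σ pr : Fin (m + 1)) : ℕ) := by
      intro σ
      rw [sfn_lt σ hrm]
    -- tcf transfer for insertion
    have htransfer_ins : ∀ (τ : Equiv.Perm (Fin m)) (pt : Fin (m + 1)),
        ((pt : ℕ) = tcf (sfn τ) r) →
        ∀ r' ≤ r, tcf (sfn τ) r'
          = tcf (sfn ((finSuccEquiv' pr).trans
              ((Equiv.optionCongr τ).trans (finSuccEquiv' pt).symm))) r' := by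
      intro τ pt hpt
      apply tcf_congr_of_iff (t := tcf (sfn τ) r) ?_ le_rfl
      intro k hk s hs
      have hkm : k < m := by omega
      have e1 : ((pr.succAbove ⟨k, hkm⟩ : Fin (m + 1)) : ℕ) = k := by
        rw [hsucc_pr_val, if_pos hk]
      have e2 : sfn ((finSuccEquiv' pr).trans
          ((Equiv.optionCongr τ).trans (finSuccEquiv' pt).symm)) k
          = ((pt.succAbove (τ ⟨k, hkm⟩) : Fin (m + 1)) : ℕ) := by
        have := hins_val τ pt ⟨k, hkm⟩; rwa [e1] at this
      have e3 : sfn τ k = ((τ ⟨k, hkm⟩ : Fin m) : ℕ) := sfn_lt τ hkm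
      rw [e2, e3, hval]
      rw [hpt]
      by_cases hy : ((τ ⟨k, hkm⟩ : Fin m) : ℕ) < tcf (sfn τ) r
      · rw [if_pos hy]
      · rw [if_neg hy]; omega
    -- tcf transfer for deletion
    have htransfer_del : ∀ (σ : Equiv.Perm (Fin (m + 1))) (pt : Fin (m + 1))
        (h : σ pr = pt), ((pt : ℕ) = tcf (sfn σ) r) →
        ∀ r' ≤ r, tcf (sfn σ) r'
          = tcf (sfn (Equiv.removeNone
              ((finSuccEquiv' pr).symm.trans (σ.trans (finSuccEquiv' pt))))) r' := by
      intro σ pt h hpt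
      apply tcf_congr_of_iff (t := tcf (sfn σ) r) ?_ le_rfl
      intro k hk s hs
      have hkm : k < m := by omega
      have e1 : ((pr.succAbove ⟨k, hkm⟩ : Fin (m + 1)) : ℕ) = k := by
        rw [hsucc_pr_val, if_pos hk]
      have e2 : ((pt.succAbove ((Equiv.removeNone
          ((finSuccEquiv' pr).symm.trans (σ.trans (finSuccEquiv' pt)))) ⟨k, hkm⟩)
            : Fin (m + 1)) : ℕ) = sfn σ k := by
        have := hdel_val σ pt h ⟨k, hkm⟩; rwa [e1] at this
      have e3 : sfn (Equiv.removeNone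
          ((finSuccEquiv' pr).symm.trans (σ.trans (finSuccEquiv' pt)))) k
          = (((Equiv.removeNone ((finSuccEquiv' pr).symm.trans
              (σ.trans (finSuccEquiv' pt)))) ⟨k, hkm⟩ : Fin m) : ℕ) := sfn_lt _ hkm
      rw [hval] at e2
      rw [← e2, e3, hpt]
      by_cases hy : (((Equiv.removeNone ((finSuccEquiv' pr).symm.trans
          (σ.trans (finSuccEquiv' pt)))) ⟨k, hkm⟩ : Fin m) : ℕ) < tcf (sfn σ) r
      · rw [if_pos hy]
      · rw [if_neg hy]; omega
    rw [cnt]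
    refine Finset.card_bij'
      (fun σ _ => Equiv.removeNone ((finSuccEquiv' pr).symm.trans
          (σ.trans (finSuccEquiv' ((tcf (sfn σ) r : ℕ) : Fin (m + 1))))))
      (fun τ _ => (finSuccEquiv' pr).trans ((Equiv.optionCongr τ).trans
          (finSuccEquiv' ((tcf (sfn τ) r : ℕ) : Fin (m + 1))).symm))
      ?_ ?_ ?_ ?_
    · -- del maps Cp-perms to winners of rank r in S_m
      intro σ hσ
      simp only [Finset.mem_filter, Finset.mem_univ, true_and, hCpdef] at hσ ⊢
      obtain ⟨hc1, hc2⟩ := hσ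
      have htr : tcf (sfn σ) r < m + 1 := by have := tcf_le (sfn σ) r; omega
      have hptv : (((tcf (sfn σ) r : ℕ) : Fin (m + 1)) : ℕ) = tcf (sfn σ) r :=
        Fin.val_cast_of_lt htr
      have hσpr : σ pr = ((tcf (sfn σ) r : ℕ) : Fin (m + 1)) := by
        apply Fin.ext
        rw [hptv, ← hsfn_r σ, hc1]
      have htf := htransfer_del σ _ hσpr hptv r le_rfl
      rw [← htf]
      -- goal : tcf (sfn σ) r ≤ sfn (del σ) r
      have e1 : ((pr.succAbove ⟨r, hrmm⟩ : Fin (m + 1)) : ℕ) = r + 1 := by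
        rw [hsucc_pr_val, if_neg (lt_irrefl r)]
      have e2 := hdel_val σ _ hσpr ⟨r, hrmm⟩
      rw [e1, hval, hptv] at e2
      have e3 : sfn (Equiv.removeNone ((finSuccEquiv' pr).symm.trans
          (σ.trans (finSuccEquiv' ((tcf (sfn σ) r : ℕ) : Fin (m + 1)))))) r
          = (((Equiv.removeNone ((finSuccEquiv' pr).symm.trans
              (σ.trans (finSuccEquiv' ((tcf (sfn σ) r : ℕ) : Fin (m + 1)))))) ⟨r, hrmm⟩
                : Fin m) : ℕ) := sfn_lt _ hrmm
      rw [e3]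
      by_cases hy : (((Equiv.removeNone ((finSuccEquiv' pr).symm.trans
          (σ.trans (finSuccEquiv' ((tcf (sfn σ) r : ℕ) : Fin (m + 1)))))) ⟨r, hrmm⟩
            : Fin m) : ℕ) < tcf (sfn σ) r
      · rw [if_pos hy] at e2; omega
      · omega
    · -- ins maps winners to Cp-perms
      intro τ hτ
      simp only [Finset.mem_filter, Finset.mem_univ, true_and, hCpdef] at hτ ⊢
      have htr : tcf (sfn τ) r < m + 1 := by have := tcf_le (sfn τ) r; omega
      have hptv : (((tcf (sfn τ) r : ℕ) : Fin (m + 1)) : ℕ) = tcf (sfn τ) r :=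
        Fin.val_cast_of_lt htr
      have htf := htransfer_ins τ _ hptv r le_rfl
      have hv1 : sfn ((finSuccEquiv' pr).trans ((Equiv.optionCongr τ).trans
          (finSuccEquiv' ((tcf (sfn τ) r : ℕ) : Fin (m + 1))).symm)) r = tcf (sfn τ) r := by
        rw [hsfn_r, hins_at, hptv]
      have e1 : ((pr.succAbove ⟨r, hrmm⟩ : Fin (m + 1)) : ℕ) = r + 1 := by
        rw [hsucc_pr_val, if_neg (lt_irrefl r)]
      have e2 := hins_val τ ((tcf (sfn τ) r : ℕ) : Fin (m + 1)) ⟨r, hrmm⟩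
      rw [e1, hval, hptv] at e2
      have e3 : sfn τ r = ((τ ⟨r, hrmm⟩ : Fin m) : ℕ) := sfn_lt τ hrmm
      rw [e3] at hτ
      constructor
      · rw [hv1, ← htf]
      · rw [← htf, e2]
        by_cases hy : ((τ ⟨r, hrmm⟩ : Fin m) : ℕ) < tcf (sfn τ) r
        · rw [if_pos hy]; omega
        · rw [if_neg hy]; omega
    · -- right inverse : ins (del σ) = σ
      intro σ hσ
      simp only [Finset.mem_filter, Finset.mem_univ, true_and, hCpdef] at hσ
      obtain ⟨hc1, hc2⟩ := hσ
      have htr : tcf (sfn σ) r < m + 1 := by have := tcf_le (sfn σ) r; omega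
      have hptv : (((tcf (sfn σ) r : ℕ) : Fin (m + 1)) : ℕ) = tcf (sfn σ) r :=
        Fin.val_cast_of_lt htr
      have hσpr : σ pr = ((tcf (sfn σ) r : ℕ) : Fin (m + 1)) := by
        apply Fin.ext
        rw [hptv, ← hsfn_r σ, hc1]
      have htf := htransfer_del σ _ hσpr hptv r le_rfl
      show (finSuccEquiv' pr).trans ((Equiv.optionCongr (Equiv.removeNone
          ((finSuccEquiv' pr).symm.trans (σ.trans (finSuccEquiv'
            ((tcf (sfn σ) r : ℕ) : Fin (m + 1))))))).trans
          (finSuccEquiv' ((tcf (sfn (Equiv.removeNone ((finSuccEquiv' pr).symm.trans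
            (σ.trans (finSuccEquiv' ((tcf (sfn σ) r : ℕ) : Fin (m + 1))))))) r : ℕ)
              : Fin (m + 1))).symm) = σ
      rw [← htf]
      apply Equiv.ext
      intro y
      by_cases hy : y = pr
      · subst hy
        rw [hins_at, hσpr]
      · obtain ⟨x, hx⟩ := Fin.exists_succAbove_eq (show y ≠ pr from hy)
        rw [← hx, hins_ab, hdel_ab σ _ hσpr x]
    · -- left inverse : del (ins τ) = τ
      intro τ hτ
      simp only [Finset.mem_filter, Finset.mem_univ, true_and] at hτ
      have htr : tcf (sfn τ) r < m + 1 := by have := tcf_le (sfn τ) r; omega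
      have hptv : (((tcf (sfn τ) r : ℕ) : Fin (m + 1)) : ℕ) = tcf (sfn τ) r :=
        Fin.val_cast_of_lt htr
      have htf := htransfer_ins τ _ hptv r le_rfl
      show Equiv.removeNone ((finSuccEquiv' pr).symm.trans
          (((finSuccEquiv' pr).trans ((Equiv.optionCongr τ).trans
            (finSuccEquiv' ((tcf (sfn τ) r : ℕ) : Fin (m + 1))).symm)).trans
          (finSuccEquiv' ((tcf (sfn ((finSuccEquiv' pr).trans ((Equiv.optionCongr τ).trans
            (finSuccEquiv' ((tcf (sfn τ) r : ℕ) : Fin (m + 1))).symm))) r : ℕ)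
              : Fin (m + 1))))) = τ
      rw [← htf]
      apply Equiv.ext
      intro x
      apply (Fin.strictMono_succAbove ((tcf (sfn τ) r : ℕ) : Fin (m + 1))).injective
      rw [hdel_ab _ _ (hins_at τ _) x, hins_ab]
  rw [hCG] at hsplit
  rw [cnt, ← hsplit, hclaim1, hclaim2, Nat.add_comm]

end Stmt4Aux


/-- For every integer `n ≥ 2` and every `i` with `1 ≤ i < n`,
`a(n,i) = a(n,i+1) + a(n−1,i)`. -/
theorem stmt_4 (n i : ℕ) (hn : 2 ≤ n) (h1 : 1 ≤ i) (h2 : i < n) :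
    aIdx n i = aIdx n (i + 1) + aIdx (n - 1) i := by
  obtain ⟨m, rfl⟩ : ∃ m, n = m + 1 := ⟨n - 1, by omega⟩
  have e1 : aIdx (m + 1) i = Stmt4Aux.cnt (m + 1) (i - 1) :=
    Stmt4Aux.aIdx_eq_cnt h1 (by omega)
  have e2 : aIdx (m + 1) (i + 1) = Stmt4Aux.cnt (m + 1) i := by
    have h := Stmt4Aux.aIdx_eq_cnt (n := m + 1) (i := i + 1) (by omega) (by omega)
    simpa using h
  have e3 : aIdx (m + 1 - 1) i = Stmt4Aux.cnt m (i - 1) := by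
    simp only [Nat.add_sub_cancel]
    exact Stmt4Aux.aIdx_eq_cnt h1 (by omega)
  have hrec := Stmt4Aux.cnt_rec m (i - 1) (by omega)
  have hi1 : i - 1 + 1 = i := by omega
  rw [hi1] at hrec
  rw [e1, e2, e3, hrec]
end
end

section
/- For every integer n ≥ 1 and every i with 1 ≤ i ≤ n, a(n,i) = d(n, n+1−i). -/
open scoped Classical

noncomputable section

-- helper lemmas about cnt
def cnt (g : ℕ → ℕ) : ℕ → ℕ
  | 0 => 0
  | r + 1 => cnt g r + if cnt g r ≤ g r then 1 else 0

lemma cnt_le_succ (g : ℕ → ℕ) (r : ℕ) : cnt g (r+1) ≤ cnt g r + 1 := by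
  simp only [cnt]; split <;> omega

lemma cnt_le_self (g : ℕ → ℕ) : ∀ r, cnt g r ≤ r
  | 0 => le_refl _
  | r + 1 => by have := cnt_le_self g r; have := cnt_le_succ g r; omega

lemma cnt_mono (g : ℕ → ℕ) : Monotone (cnt g) :=
  monotone_nat_of_le_succ (fun r => by simp only [cnt]; split <;> omega)

lemma cnt_congr {g g' : ℕ → ℕ} : ∀ {r}, (∀ k < r, g k = g' k) → cnt g r = cnt g' r
  | 0, _ => rfl
  | r + 1, h => by
      have ih := cnt_congr (g := g) (g' := g') (r := r) (fun k hk => h k (by omega))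
      simp only [cnt, ih, h r (by omega)]

lemma cnt_hit {g : ℕ → ℕ} {j : ℕ} : ∀ {R}, j < cnt g R →
    ∃ r < R, cnt g r = j ∧ cnt g r ≤ g r
  | 0, h => by simp [cnt] at h
  | R + 1, h => by
      by_cases hR : j < cnt g R
      · obtain ⟨r, hr, h1, h2⟩ := cnt_hit hR
        exact ⟨r, by omega, h1, h2⟩
      · have h2 := cnt_le_succ g R
        have hj : cnt g R = j := by omega
        refine ⟨R, by omega, hj, ?_⟩
        by_contra hc
        simp only [cnt, if_neg hc] at h
        omega

lemma cnt_matched_unique {g : ℕ → ℕ} {r s : ℕ} (hr : cnt g r ≤ g r) (hs : cnt g s ≤ g s)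
    (h : cnt g r = cnt g s) : r = s := by
  rcases lt_trichotomy r s with hlt | he | hlt
  · have : cnt g (r+1) ≤ cnt g s := cnt_mono g (by omega)
    simp only [cnt, if_pos hr] at this; omega
  · exact he
  · have : cnt g (s+1) ≤ cnt g r := cnt_mono g (by omega)
    simp only [cnt, if_pos hs] at this; omega

-- pickMin lemmas
lemma pickMin_eq_some {n : ℕ} {α : Type*} [LinearOrder α] (key : Fin n → α)
    (c : Finset (Fin n)) (v : Fin n) (hv : v ∈ c)
    (hmin : ∀ u ∈ c, u ≠ v → key v < key u) : pickMin key c = some v := by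
  have hne : c.Nonempty := ⟨v, hv⟩
  rw [pickMin, dif_pos hne]
  obtain ⟨hm, hspec⟩ := Classical.choose_spec (Finset.exists_min_image c key hne)
  congr 1
  by_contra hne'
  exact absurd (hspec v hv) (not_le.mpr (hmin _ hm hne'))

lemma pickMin_eq_none {n : ℕ} {α : Type*} [LinearOrder α] (key : Fin n → α)
    (c : Finset (Fin n)) (h : c = ∅) : pickMin key c = none := by
  rw [pickMin, dif_neg]; simp [h]
def pfn {n : ℕ} (σ : Equiv.Perm (Fin n)) : ℕ → ℕ :=
  fun k => if h : k < n then (σ ⟨k, h⟩ : ℕ) else 0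

lemma pfn_apply {n : ℕ} (σ : Equiv.Perm (Fin n)) (v : Fin n) :
    pfn σ (v : ℕ) = (σ v : ℕ) := by
  simp [pfn, v.isLt]

lemma greedy_eq (n : ℕ) (π : Equiv.Perm (Fin n)) :
    ∀ j, greedyRun (monoAdj n) (fun i => π i) j =
      Finset.univ.filter (fun v => cnt (pfn π⁻¹) ((π v : ℕ)) ≤ (v : ℕ) ∧
        cnt (pfn π⁻¹) ((π v : ℕ)) < j) := by
  set g := pfn π⁻¹ with hg
  have key1 : ∀ u : Fin n, g ((π u : ℕ)) = (u : ℕ) := by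
    intro u; rw [hg, pfn_apply]; simp
  intro j
  induction j with
  | zero => simp [greedyRun]
  | succ j ih =>
    set C := (Finset.univ.filter fun i => monoAdj n j i) \
      greedyRun (monoAdj n) (fun i => π i) j with hC
    have memC : ∀ u : Fin n, u ∈ C ↔ (j ≤ (u : ℕ) ∧
        ¬(cnt g ((π u : ℕ)) ≤ (u : ℕ) ∧ cnt g ((π u : ℕ)) < j)) := by
      intro u
      rw [hC, Finset.mem_sdiff, ih, Finset.mem_filter, Finset.mem_filter]
      simp [monoAdj, Finset.mem_filter]
    have candProp : ∀ u ∈ C,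
        (cnt g ((π u : ℕ)) ≤ (u : ℕ) ∧ j ≤ cnt g ((π u : ℕ))) ∨
        ((u : ℕ) < cnt g ((π u : ℕ)) ∧ j < cnt g ((π u : ℕ))) := by
      intro u hu
      rw [memC] at hu
      obtain ⟨h1, h2⟩ := hu
      by_cases hm : cnt g ((π u : ℕ)) ≤ (u : ℕ)
      · left; exact ⟨hm, by omega⟩
      · right; omega
    by_cases hA : ∃ r < n, cnt g r = j ∧ cnt g r ≤ g r
    · obtain ⟨r, hrn, hcj, hmr⟩ := hA
      set v0 := π⁻¹ ⟨r, hrn⟩ with hv0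
      have hπv0 : (π v0 : ℕ) = r := by rw [hv0]; simp
      have hgr : g r = (v0 : ℕ) := by rw [← hπv0, key1]
      have hv0C : v0 ∈ C := by
        rw [memC, hπv0]
        constructor
        · omega
        · omega
      have huniq : ∀ u : Fin n, cnt g ((π u : ℕ)) ≤ (u : ℕ) →
          cnt g ((π u : ℕ)) = j → u = v0 := by
        intro u hm hj
        have hmu : cnt g ((π u : ℕ)) ≤ g ((π u : ℕ)) := by rw [key1]; exact hm
        have := cnt_matched_unique hmu hmr (by omega)
        have hπu : π u = ⟨r, hrn⟩ := Fin.ext this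
        rw [hv0, ← hπu]; simp
      have hmin : ∀ u ∈ C, u ≠ v0 → π v0 < π u := by
        intro u hu hne
        have hru : r < (π u : ℕ) := by
          rcases candProp u hu with ⟨hm, hge⟩ | ⟨hm, hgt⟩
          · rcases Nat.eq_or_lt_of_le hge with he | hlt
            · exact absurd (huniq u hm he.symm) hne
            · by_contra hle
              have : cnt g ((π u : ℕ)) ≤ cnt g r := cnt_mono g (by omega)
              omega
          · by_contra hle
            have : cnt g ((π u : ℕ)) ≤ cnt g r := cnt_mono g (by omega)
            omega
        rw [Fin.lt_def, hπv0]; exact hru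
      have hpick : pickMin (fun i => π i) C = some v0 :=
        pickMin_eq_some _ _ _ hv0C hmin
      have hstep : greedyRun (monoAdj n) (fun i => π i) (j+1) =
          insert v0 (greedyRun (monoAdj n) (fun i => π i) j) := by
        rw [greedyRun, ← hC, hpick]
      rw [hstep, ih]
      ext x
      simp only [Finset.mem_insert, Finset.mem_filter, Finset.mem_univ, true_and]
      constructor
      · rintro (rfl | ⟨h1, h2⟩)
        · rw [hπv0]; omega
        · omega
      · rintro ⟨h1, h2⟩
        by_cases hlt : cnt g ((π x : ℕ)) < j
        · right; exact ⟨h1, hlt⟩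
        · left; exact huniq x h1 (by omega)
    · have hCe : C = ∅ := by
        ext u
        simp only [Finset.notMem_empty, iff_false]
        intro hu
        rcases candProp u hu with ⟨hm, hge⟩ | ⟨hm, hgt⟩
        · have hmu : cnt g ((π u : ℕ)) ≤ g ((π u : ℕ)) := by rw [key1]; exact hm
          have hstep : j < cnt g ((π u : ℕ) + 1) := by
            simp only [cnt, if_pos hmu]; omega
          obtain ⟨r, hr, h1, h2⟩ := cnt_hit hstep
          exact hA ⟨r, by have := (π u).isLt; omega, h1, h2⟩
        · obtain ⟨r, hr, h1, h2⟩ := cnt_hit hgt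
          exact hA ⟨r, by have := (π u).isLt; omega, h1, h2⟩
      have hstep : greedyRun (monoAdj n) (fun i => π i) (j+1) =
          greedyRun (monoAdj n) (fun i => π i) j := by
        rw [greedyRun, ← hC, pickMin_eq_none _ _ hCe]
      rw [hstep, ih]
      ext x
      simp only [Finset.mem_filter, Finset.mem_univ, true_and]
      constructor
      · rintro ⟨h1, h2⟩; exact ⟨h1, by omega⟩
      · rintro ⟨h1, h2⟩
        refine ⟨h1, ?_⟩
        by_contra hc
        have : cnt g ((π x : ℕ)) = j := by omega
        exact hA ⟨(π x : ℕ), (π x).isLt, this, by rw [key1]; omega⟩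
-- delete/insert machinery
def delP {m : ℕ} (a : Fin (m+1)) (σ : Equiv.Perm (Fin (m+1))) : Equiv.Perm (Fin m) :=
  Equiv.removeNone ((finSuccEquiv' a).symm.trans (σ.trans (finSuccEquiv' (σ a))))

lemma delP_succAbove {m : ℕ} (a : Fin (m+1)) (σ : Equiv.Perm (Fin (m+1))) (j : Fin m) :
    (σ a).succAbove (delP a σ j) = σ (a.succAbove j) := by
  set e := (finSuccEquiv' a).symm.trans (σ.trans (finSuccEquiv' (σ a))) with he
  have hne : σ (a.succAbove j) ≠ σ a := by
    simp [σ.injective.ne_iff, Fin.succAbove_ne]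
  obtain ⟨k, hk⟩ := Fin.exists_succAbove_eq hne
  have hes : e (some j) = some k := by
    simp only [he, Equiv.trans_apply, Equiv.symm_trans_apply]
    rw [show (finSuccEquiv' a).symm (some j) = a.succAbove j from
      finSuccEquiv'_symm_some a j, ← hk]
    exact finSuccEquiv'_succAbove _ _
  have : some (Equiv.removeNone e j) = e (some j) :=
    Equiv.removeNone_some e ⟨k, hes⟩
  rw [hes] at this
  have hjk : Equiv.removeNone e j = k := by injection this
  rw [delP, ← he, hjk, hk]

def insP {m : ℕ} (a b : Fin (m+1)) (σ' : Equiv.Perm (Fin m)) : Equiv.Perm (Fin (m+1)) :=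
  (finSuccEquiv' a).trans ((Equiv.optionCongr σ').trans (finSuccEquiv' b).symm)

lemma insP_apply_self {m : ℕ} (a b : Fin (m+1)) (σ' : Equiv.Perm (Fin m)) :
    insP a b σ' a = b := by
  simp only [insP, Equiv.trans_apply]
  rw [show (finSuccEquiv' a) a = none from finSuccEquiv'_at a]
  simp [finSuccEquiv'_symm_none]

lemma insP_succAbove {m : ℕ} (a b : Fin (m+1)) (σ' : Equiv.Perm (Fin m)) (j : Fin m) :
    insP a b σ' (a.succAbove j) = b.succAbove (σ' j) := by
  simp only [insP, Equiv.trans_apply]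
  rw [show (finSuccEquiv' a) (a.succAbove j) = some j from finSuccEquiv'_succAbove a j]
  simp [finSuccEquiv'_symm_some]

lemma insP_delP {m : ℕ} (a : Fin (m+1)) (σ : Equiv.Perm (Fin (m+1))) :
    insP a (σ a) (delP a σ) = σ := by
  apply Equiv.ext
  intro x
  rcases eq_or_ne x a with rfl | hx
  · rw [insP_apply_self]
  · obtain ⟨j, rfl⟩ := Fin.exists_succAbove_eq hx
    rw [insP_succAbove, delP_succAbove]

lemma delP_insP {m : ℕ} (a b : Fin (m+1)) (σ' : Equiv.Perm (Fin m)) :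
    delP a (insP a b σ') = σ' := by
  apply Equiv.ext
  intro j
  have h := delP_succAbove a (insP a b σ') j
  rw [insP_succAbove, insP_apply_self] at h
  exact Fin.succAbove_right_injective h

lemma succAbove_val {m : ℕ} (p : Fin (m+1)) (j : Fin m) :
    ((p.succAbove j : Fin (m+1)) : ℕ) =
      if (j : ℕ) < (p : ℕ) then (j : ℕ) else (j : ℕ) + 1 := by
  rcases lt_or_ge ((j : ℕ)) ((p : ℕ)) with h | h
  · rw [Fin.succAbove_of_castSucc_lt _ _ (by rwa [Fin.lt_def])]
    simp [h]
  · rw [Fin.succAbove_of_le_castSucc _ _ (by rwa [Fin.le_def])]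
    simp [Nat.not_lt.mpr h]

lemma cnt_rel {c : ℕ} {g g' : ℕ → ℕ} : ∀ {j : ℕ},
    (∀ k < j, (g k < c ∧ g' k = g k) ∨ (c < g k ∧ g' k + 1 = g k)) →
    (cnt g j ≤ c ∨ cnt g' j ≤ c) → cnt g' j = cnt g j
  | 0, _, _ => rfl
  | j + 1, hyp, hc => by
    have hd : cnt g' j = cnt g j := by
      refine cnt_rel (fun k hk => hyp k (by omega)) ?_
      rcases hc with h | h
      · exact Or.inl (le_trans (cnt_mono g (Nat.le_succ j)) h)
      · exact Or.inr (le_trans (cnt_mono g' (Nat.le_succ j)) h)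
    have hdc : cnt g j ≤ c := by
      rcases hc with h | h
      · exact le_trans (cnt_mono g (Nat.le_succ j)) h
      · rw [← hd]; exact le_trans (cnt_mono g' (Nat.le_succ j)) h
    rcases hyp j (by omega) with ⟨h1, h2⟩ | ⟨h1, h2⟩
    · simp only [cnt, hd, h2]
    · have hb1 : cnt g j ≤ g j := by omega
      have hb2 : cnt g j ≤ g' j := by omega
      simp only [cnt, hd, if_pos hb1, if_pos hb2]
lemma pfn_eq {n : ℕ} (σ : Equiv.Perm (Fin n)) {k : ℕ} (h : k < n) :
    pfn σ k = (σ ⟨k, h⟩ : ℕ) := dif_pos h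
def Acard (n r : ℕ) : ℕ :=
  (Finset.univ.filter fun σ : Equiv.Perm (Fin n) => cnt (pfn σ) r ≤ pfn σ r).card

-- swap helpers
def swR (m r : ℕ) (hr : r < m) : Equiv.Perm (Fin (m+1)) :=
  Equiv.swap ⟨r, by omega⟩ ⟨r+1, by omega⟩

lemma swp_lt {m r : ℕ} (hr : r < m) (σ : Equiv.Perm (Fin (m+1))) {k : ℕ} (hk : k < r) :
    pfn (σ * swR m r hr) k = pfn σ k := by
  rw [pfn_eq _ (show k < m+1 by omega), pfn_eq _ (show k < m+1 by omega),
    Equiv.Perm.mul_apply, swR, Equiv.swap_apply_of_ne_of_ne]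
  · exact Fin.ne_of_val_ne (by simp; omega)
  · exact Fin.ne_of_val_ne (by simp; omega)

lemma swp_r {m r : ℕ} (hr : r < m) (σ : Equiv.Perm (Fin (m+1))) :
    pfn (σ * swR m r hr) r = pfn σ (r+1) := by
  rw [pfn_eq _ (show r < m+1 by omega), pfn_eq _ (show r+1 < m+1 by omega),
    Equiv.Perm.mul_apply, swR, Equiv.swap_apply_left]

lemma swp_r1 {m r : ℕ} (hr : r < m) (σ : Equiv.Perm (Fin (m+1))) :
    pfn (σ * swR m r hr) (r+1) = pfn σ r := by
  rw [pfn_eq _ (show r+1 < m+1 by omega), pfn_eq _ (show r < m+1 by omega),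
    Equiv.Perm.mul_apply, swR, Equiv.swap_apply_right]

lemma swp_cnt {m r : ℕ} (hr : r < m) (σ : Equiv.Perm (Fin (m+1))) :
    cnt (pfn (σ * swR m r hr)) r = cnt (pfn σ) r :=
  cnt_congr (fun k hk => swp_lt hr σ hk)

lemma swp_swp {m r : ℕ} (hr : r < m) (σ : Equiv.Perm (Fin (m+1))) :
    (σ * swR m r hr) * swR m r hr = σ := by
  rw [mul_assoc, swR, Equiv.swap_mul_self, mul_one]

lemma cnt_succ (g : ℕ → ℕ) (r : ℕ) :
    cnt g (r+1) = cnt g r + if cnt g r ≤ g r then 1 else 0 := rfl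

lemma B1 (m r : ℕ) (hr : r < m) :
    (Finset.univ.filter fun σ : Equiv.Perm (Fin (m+1)) =>
      cnt (pfn σ) r ≤ pfn σ r ∧ ¬ (pfn σ (r+1) = cnt (pfn σ) r)).card
    = (Finset.univ.filter fun τ : Equiv.Perm (Fin (m+1)) =>
      cnt (pfn τ) (r+1) ≤ pfn τ (r+1)).card := by
  apply Finset.card_nbij'
    (i := fun σ => if cnt (pfn σ) r < pfn σ (r+1) then σ else σ * swR m r hr)
    (j := fun τ => if cnt (pfn τ) r ≤ pfn τ r then τ else τ * swR m r hr)
  · intro σ hσ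
    simp only [Finset.mem_coe, Finset.mem_filter, Finset.mem_univ, true_and] at hσ ⊢
    obtain ⟨h1, h2⟩ := hσ
    split_ifs with h3
    · rw [cnt_succ, if_pos h1]; omega
    · rw [cnt_succ, swp_r1 hr, swp_r hr, swp_cnt hr]
      rw [if_neg (by omega)]
      omega
  · intro τ hτ
    simp only [Finset.mem_coe, Finset.mem_filter, Finset.mem_univ, true_and] at hτ ⊢
    rw [cnt_succ] at hτ
    split_ifs with h3
    · rw [if_pos h3] at hτ
      exact ⟨h3, by omega⟩
    · rw [if_neg h3] at hτ
      refine ⟨?_, ?_⟩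
      · rw [swp_r hr, swp_cnt hr]; omega
      · rw [swp_r1 hr, swp_cnt hr]; omega
  · intro σ hσ
    simp only [Finset.mem_coe, Finset.mem_filter, Finset.mem_univ, true_and] at hσ
    obtain ⟨h1, h2⟩ := hσ
    by_cases h3 : cnt (pfn σ) r < pfn σ (r+1)
    all_goals dsimp only
    · rw [if_pos h3, if_pos h1]
    · rw [if_neg h3, if_neg (by rw [swp_r hr, swp_cnt hr]; omega), swp_swp hr]
  · intro τ hτ
    simp only [Finset.mem_coe, Finset.mem_filter, Finset.mem_univ, true_and] at hτ
    rw [cnt_succ] at hτ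
    by_cases h3 : cnt (pfn τ) r ≤ pfn τ r
    all_goals dsimp only
    · rw [if_pos h3] at hτ
      rw [if_pos h3, if_pos (by omega)]
    · rw [if_neg h3] at hτ
      rw [if_neg h3, if_neg (by rw [swp_r1 hr, swp_cnt hr]; omega), swp_swp hr]

lemma B2 (m r : ℕ) (hr : r < m) :
    (Finset.univ.filter fun σ : Equiv.Perm (Fin (m+1)) =>
      cnt (pfn σ) r ≤ pfn σ r ∧ pfn σ (r+1) = cnt (pfn σ) r).card
    = (Finset.univ.filter fun σ' : Equiv.Perm (Fin m) =>
      cnt (pfn σ') r ≤ pfn σ' r).card := by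
  have hr1 : r + 1 < m + 1 := by omega
  have hsA : ∀ k (h1 : k < m) (h2 : k < m + 1) (h3 : k ≤ r),
      (⟨r+1, hr1⟩ : Fin (m+1)).succAbove ⟨k, h1⟩ = (⟨k, h2⟩ : Fin (m+1)) := by
    intro k h1 h2 h3
    apply Fin.ext
    rw [succAbove_val, if_pos (show k < r + 1 by omega)]
  have hrel : ∀ (σ : Equiv.Perm (Fin (m+1))), pfn σ (r+1) = cnt (pfn σ) r →
      ∀ k, k ≤ r →
      (pfn σ k < cnt (pfn σ) r ∧ pfn (delP ⟨r+1, hr1⟩ σ) k = pfn σ k) ∨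
        (cnt (pfn σ) r < pfn σ k ∧ pfn (delP ⟨r+1, hr1⟩ σ) k + 1 = pfn σ k) := by
    intro σ hQ k hk
    have hkm : k < m := by omega
    have hkm1 : k < m + 1 := by omega
    have hcm : cnt (pfn σ) r < m + 1 := by have := cnt_le_self (pfn σ) r; omega
    have hb : σ ⟨r+1, hr1⟩ = ⟨cnt (pfn σ) r, hcm⟩ := by
      apply Fin.ext
      rw [← pfn_eq σ hr1]
      exact hQ
    have h1 := delP_succAbove (⟨r+1, hr1⟩ : Fin (m+1)) σ ⟨k, hkm⟩
    rw [hb, hsA k hkm hkm1 hk] at h1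
    have h2 := congrArg Fin.val h1
    rw [succAbove_val] at h2
    have e0 : ((⟨cnt (pfn σ) r, hcm⟩ : Fin (m+1)) : ℕ) = cnt (pfn σ) r := rfl
    have e1 : pfn σ k = ((σ ⟨k, hkm1⟩ : Fin (m+1)) : ℕ) := pfn_eq σ hkm1
    have e2 : pfn (delP ⟨r+1, hr1⟩ σ) k
        = ((delP ⟨r+1, hr1⟩ σ ⟨k, hkm⟩ : Fin m) : ℕ) := pfn_eq _ hkm
    split_ifs at h2 with h4
    · exact Or.inl ⟨by omega, by omega⟩
    · exact Or.inr ⟨by omega, by omega⟩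
  have hrel' : ∀ (σ' : Equiv.Perm (Fin m)) (c : ℕ) (hcm : c < m+1), ∀ k, k ≤ r →
      (pfn (insP ⟨r+1, hr1⟩ ⟨c, hcm⟩ σ') k < c ∧
        pfn σ' k = pfn (insP ⟨r+1, hr1⟩ ⟨c, hcm⟩ σ') k) ∨
      (c < pfn (insP ⟨r+1, hr1⟩ ⟨c, hcm⟩ σ') k ∧
        pfn σ' k + 1 = pfn (insP ⟨r+1, hr1⟩ ⟨c, hcm⟩ σ') k) := by
    intro σ' c hcm k hk
    have hkm : k < m := by omega
    have hkm1 : k < m + 1 := by omega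
    have h1 : insP ⟨r+1, hr1⟩ ⟨c, hcm⟩ σ' ⟨k, hkm1⟩
        = Fin.succAbove ⟨c, hcm⟩ (σ' ⟨k, hkm⟩) := by
      rw [← hsA k hkm hkm1 hk]
      exact insP_succAbove _ _ _ _
    have h2 := congrArg Fin.val h1
    rw [succAbove_val] at h2
    have e0 : ((⟨c, hcm⟩ : Fin (m+1)) : ℕ) = c := rfl
    have e1 : pfn σ' k = ((σ' ⟨k, hkm⟩ : Fin m) : ℕ) := pfn_eq σ' hkm
    have e2 : pfn (insP ⟨r+1, hr1⟩ ⟨c, hcm⟩ σ') k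
        = ((insP ⟨r+1, hr1⟩ ⟨c, hcm⟩ σ' ⟨k, hkm1⟩ : Fin (m+1)) : ℕ) := pfn_eq _ hkm1
    split_ifs at h2 with h4
    · exact Or.inl ⟨by omega, by omega⟩
    · exact Or.inr ⟨by omega, by omega⟩
  apply Finset.card_nbij'
    (i := fun σ => delP ⟨r+1, hr1⟩ σ)
    (j := fun σ' => insP ⟨r+1, hr1⟩
      ⟨cnt (pfn σ') r, by have := cnt_le_self (pfn σ') r; omega⟩ σ')
  · intro σ hσ
    simp only [Finset.mem_coe, Finset.mem_filter, Finset.mem_univ, true_and] at hσ ⊢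
    obtain ⟨h1, h2⟩ := hσ
    have hcc : cnt (pfn (delP (⟨r+1, hr1⟩ : Fin (m+1)) σ)) r = cnt (pfn σ) r :=
      cnt_rel (fun k hk => hrel σ h2 k (by omega)) (Or.inl le_rfl)
    rcases hrel σ h2 r le_rfl with ⟨ha, hb⟩ | ⟨ha, hb⟩
    · omega
    · omega
  · intro σ' hσ'
    simp only [Finset.mem_coe, Finset.mem_filter, Finset.mem_univ, true_and] at hσ' ⊢
    have hcm : cnt (pfn σ') r < m + 1 := by have := cnt_le_self (pfn σ') r; omega
    have hcc : cnt (pfn σ') r =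
        cnt (pfn (insP ⟨r+1, hr1⟩ ⟨cnt (pfn σ') r, hcm⟩ σ')) r :=
      cnt_rel (fun k hk => hrel' σ' (cnt (pfn σ') r) hcm k (by omega)) (Or.inr le_rfl)
    have hQ : pfn (insP ⟨r+1, hr1⟩ ⟨cnt (pfn σ') r, hcm⟩ σ') (r+1) = cnt (pfn σ') r := by
      rw [pfn_eq _ hr1]
      rw [show (⟨r+1, hr1⟩ : Fin (m+1)) = ⟨r+1, hr1⟩ from rfl, insP_apply_self]
    constructor
    · rcases hrel' σ' (cnt (pfn σ') r) hcm r le_rfl with ⟨ha, hb⟩ | ⟨ha, hb⟩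
      · omega
      · omega
    · rw [hQ, ← hcc]
  · intro σ hσ
    simp only [Finset.mem_coe, Finset.mem_filter, Finset.mem_univ, true_and] at hσ
    obtain ⟨h1, h2⟩ := hσ
    have hcc : cnt (pfn (delP (⟨r+1, hr1⟩ : Fin (m+1)) σ)) r = cnt (pfn σ) r :=
      cnt_rel (fun k hk => hrel σ h2 k (by omega)) (Or.inl le_rfl)
    have hbv : (⟨cnt (pfn (delP (⟨r+1, hr1⟩ : Fin (m+1)) σ)) r, by
        have := cnt_le_self (pfn (delP (⟨r+1, hr1⟩ : Fin (m+1)) σ)) r; omega⟩ : Fin (m+1))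
        = σ ⟨r+1, hr1⟩ := by
      apply Fin.ext
      show cnt (pfn (delP (⟨r+1, hr1⟩ : Fin (m+1)) σ)) r = _
      rw [hcc, ← h2, pfn_eq σ hr1]
    dsimp only
    rw [hbv]
    exact insP_delP _ σ
  · intro σ' hσ'
    exact delP_insP _ _ σ'

lemma Asplit (m r : ℕ) (hr : r < m) :
    Acard (m+1) r = Acard (m+1) (r+1) + Acard m r := by
  unfold Acard
  have h := Finset.card_filter_add_card_filter_not
    (s := Finset.univ.filter fun σ : Equiv.Perm (Fin (m+1)) => cnt (pfn σ) r ≤ pfn σ r)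
    (p := fun σ => pfn σ (r+1) = cnt (pfn σ) r)
  rw [Finset.filter_filter, Finset.filter_filter] at h
  rw [← h, B2 m r hr, B1 m r hr]
  omega
lemma Dsplit (m k : ℕ) (hk : k ≤ m) :
    dIdx (m+1) (k+1) = dIdx (m+1) k + dIdx m k := by
  have km1 : k < m + 1 := by omega
  unfold dIdx
  have h := Finset.card_filter_add_card_filter_not
    (s := Finset.univ.filter fun σ : Equiv.Perm (Fin (m+1)) => ∀ x, σ x = x → (x : ℕ) < k+1)
    (p := fun σ => σ ⟨k, km1⟩ = ⟨k, km1⟩)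
  rw [Finset.filter_filter, Finset.filter_filter] at h
  rw [← h]
  have e1 : (Finset.univ.filter fun σ : Equiv.Perm (Fin (m+1)) =>
      (∀ x, σ x = x → (x : ℕ) < k+1) ∧ ¬ σ ⟨k, km1⟩ = ⟨k, km1⟩)
      = Finset.univ.filter fun σ : Equiv.Perm (Fin (m+1)) => ∀ x, σ x = x → (x : ℕ) < k := by
    ext σ
    simp only [Finset.mem_filter, Finset.mem_univ, true_and]
    constructor
    · rintro ⟨h1, h2⟩ x hx
      have := h1 x hx
      rcases Nat.lt_or_ge (x : ℕ) k with h3 | h3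
      · exact h3
      · exfalso
        have hxk : x = ⟨k, km1⟩ := by apply Fin.ext; show (x : ℕ) = k; omega
        rw [hxk] at hx
        exact h2 hx
    · intro h1
      have ek : ((⟨k, km1⟩ : Fin (m+1)) : ℕ) = k := rfl
      constructor
      · intro x hx
        have := h1 x hx
        omega
      · intro hc
        have := h1 _ hc
        omega
  have e2 : (Finset.univ.filter fun σ : Equiv.Perm (Fin (m+1)) =>
      (∀ x, σ x = x → (x : ℕ) < k+1) ∧ σ ⟨k, km1⟩ = ⟨k, km1⟩).card
      = (Finset.univ.filter fun σ' : Equiv.Perm (Fin m) => ∀ x, σ' x = x → (x : ℕ) < k).card := by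
    apply Finset.card_nbij' (i := fun σ => delP ⟨k, km1⟩ σ)
      (j := fun σ' => insP ⟨k, km1⟩ ⟨k, km1⟩ σ')
    · intro σ hσ
      simp only [Finset.mem_coe, Finset.mem_filter, Finset.mem_univ, true_and] at hσ ⊢
      obtain ⟨h1, h2⟩ := hσ
      intro j hj
      have hd := delP_succAbove (⟨k, km1⟩ : Fin (m+1)) σ j
      rw [h2, hj] at hd
      have hfix := h1 _ hd.symm
      have hv := succAbove_val (⟨k, km1⟩ : Fin (m+1)) j
      rw [show ((⟨k, km1⟩ : Fin (m+1)) : ℕ) = k from rfl] at hv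
      split_ifs at hv with h5
      · exact h5
      · omega
    · intro σ' hσ'
      simp only [Finset.mem_coe, Finset.mem_filter, Finset.mem_univ, true_and] at hσ' ⊢
      constructor
      · intro x hx
        rcases eq_or_ne x ⟨k, km1⟩ with rfl | hne
        · show k < k + 1; omega
        · obtain ⟨j, rfl⟩ := Fin.exists_succAbove_eq hne
          rw [insP_succAbove] at hx
          have hj : σ' j = j := Fin.succAbove_right_injective hx
          have := hσ' j hj
          have hv := succAbove_val (⟨k, km1⟩ : Fin (m+1)) j
          rw [show ((⟨k, km1⟩ : Fin (m+1)) : ℕ) = k from rfl, if_pos this] at hv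
          omega
      · exact insP_apply_self _ _ _
    · intro σ hσ
      simp only [Finset.mem_coe, Finset.mem_filter, Finset.mem_univ, true_and] at hσ
      have := insP_delP (⟨k, km1⟩ : Fin (m+1)) σ
      rw [hσ.2] at this
      exact this
    · intro σ' _
      exact delP_insP _ _ σ'
  rw [e1, e2]
  omega
lemma AD : ∀ r n, r < n → Acard n r = dIdx n (n - r) := by
  intro r
  induction r with
  | zero =>
    intro n hn
    unfold Acard dIdx
    rw [Nat.sub_zero]
    congr 1
    ext σ
    simp only [Finset.mem_filter, Finset.mem_univ, true_and]
    constructor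
    · intro _
      intro x _
      exact x.isLt
    · intro _
      show cnt (pfn σ) 0 ≤ pfn σ 0
      show 0 ≤ pfn σ 0
      exact Nat.zero_le _
  | succ r ih =>
    intro n hn
    obtain ⟨m, rfl⟩ : ∃ m, n = m + 1 := ⟨n - 1, by omega⟩
    have hrm : r < m := by omega
    have h1 := Asplit m r hrm
    have h2 := ih (m+1) (by omega)
    have h3 := ih m hrm
    have h4 := Dsplit m (m - r) (by omega)
    have e1 : m + 1 - r = m - r + 1 := by omega
    have e2 : m + 1 - (r + 1) = m - r := by omega
    rw [e1] at h2
    rw [e2]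
    omega

lemma aIdx_eq_Acard (n i : ℕ) (h1 : 1 ≤ i) (h2 : i ≤ n) : aIdx n i = Acard n (i - 1) := by
  have him : i - 1 < n := by omega
  have hpred : ∀ π : Equiv.Perm (Fin n),
      ((∃ v : Fin n, (π v : ℕ) = i - 1 ∧ v ∈ rankMatched n π) ↔
      cnt (pfn π⁻¹) (i - 1) ≤ pfn π⁻¹ (i - 1)) := by
    intro π
    unfold rankMatched
    rw [greedy_eq n π n]
    constructor
    · rintro ⟨v, hv, hm⟩
      simp only [Finset.mem_filter, Finset.mem_univ, true_and] at hm
      rw [hv] at hm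
      have hπv : π v = ⟨i - 1, him⟩ := Fin.ext hv
      have hvv : pfn π⁻¹ (i - 1) = (v : ℕ) := by
        rw [pfn_eq π⁻¹ him, ← hπv, Equiv.Perm.inv_def, Equiv.symm_apply_apply]
      rw [hvv]
      exact hm.1
    · intro h
      refine ⟨π⁻¹ ⟨i - 1, him⟩, by simp, ?_⟩
      simp only [Finset.mem_filter, Finset.mem_univ, true_and]
      rw [show ((π (π⁻¹ ⟨i - 1, him⟩)) : ℕ) = i - 1 by simp]
      constructor
      · rw [show ((π⁻¹ ⟨i - 1, him⟩ : Fin n) : ℕ) = pfn π⁻¹ (i - 1) from (pfn_eq π⁻¹ him).symm]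
        exact h
      · have := cnt_le_self (pfn π⁻¹) (i - 1)
        omega
  unfold aIdx Acard
  apply Finset.card_nbij' (i := fun π => π⁻¹) (j := fun σ => σ⁻¹)
  · intro π hπ
    simp only [Finset.mem_coe, Finset.mem_filter, Finset.mem_univ, true_and] at hπ ⊢
    exact (hpred π).mp hπ
  · intro σ hσ
    simp only [Finset.mem_coe, Finset.mem_filter, Finset.mem_univ, true_and] at hσ ⊢
    apply (hpred σ⁻¹).mpr
    simpa using hσ
  · intro π _; simp
  · intro σ _; simp

/-- For every integer `n ≥ 1` and every `i` with `1 ≤ i ≤ n`, `a(n,i) = d(n, n+1−i)`. -/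
theorem stmt_6 (n i : ℕ) (hn : 1 ≤ n) (h1 : 1 ≤ i) (h2 : i ≤ n) :
    aIdx n i = dIdx n (n + 1 - i) := by
  have h3 : i - 1 < n := by omega
  rw [aIdx_eq_Acard n i h1 h2, AD (i - 1) n h3]
  congr 1
  omega
end
end
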